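/- arXiv:2004.08448 — 4 statements merged into one kernel-verified Lean document; each statement's English description precedes it below -/
import Mathlib

section
/- Let (X,d,ν) be a metric measure space with ν a doubling measure (with doubling constant c_D), let p ∈ (1,∞), and let f, g ∈ L^p(X,ν) satisfy the Hajlasz inequality |f(x) − f(y)| ≤ d(x,y)(g(x) + g(y)) for ν-a.e. x,y ∈ X. Then for every r > 0, (1/r^p) ∫_X (1/ν(B(x,r))) ∫_{B(x,r)} |f(y) − f(x)|^p dν(y) dν(x) ≤ 2^{p-1}(1 + c_D) ∫_X g^p dν (in particular the left-hand side is bounded uniformly in r by a constant times ‖g‖_{L^p}^p). -/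
open MeasureTheory Metric TopologicalSpace Set
open scoped ENNReal

private lemma doubling_iterate {X : Type*} [MetricSpace X] [MeasurableSpace X]
    (ν : Measure X) (c : ℝ≥0∞)
    (hdb : ∀ (x : X) (R : ℝ), 0 < R → ν (ball x (2 * R)) ≤ c * ν (ball x R)) :
    ∀ (k : ℕ) (x : X) (R : ℝ), 0 < R → ν (ball x (2 ^ k * R)) ≤ c ^ k * ν (ball x R) := by
  intro k
  induction k with
  | zero => intro x R hR; simp
  | succ k ih =>
    intro x R hR
    have h1 : (2 : ℝ) ^ (k + 1) * R = 2 * (2 ^ k * R) := by ring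
    calc ν (ball x (2 ^ (k + 1) * R)) = ν (ball x (2 * (2 ^ k * R))) := by rw [h1]
      _ ≤ c * ν (ball x (2 ^ k * R)) := hdb x _ (by positivity)
      _ ≤ c * (c ^ k * ν (ball x R)) := mul_le_mul_right (ih x R hR) c
      _ = c ^ (k + 1) * ν (ball x R) := by ring

private lemma totallyBounded_ball_of_doubling {X : Type*} [MetricSpace X] [MeasurableSpace X]
    [OpensMeasurableSpace X] (ν : Measure X) (c : ℝ≥0∞) (hc : c ≠ ⊤)
    (hpos : ∀ (x : X) (R : ℝ), 0 < R → 0 < ν (ball x R))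
    (hdb : ∀ (x : X) (R : ℝ), 0 < R → ν (ball x (2 * R)) ≤ c * ν (ball x R))
    (hfin : ∀ (x : X) (R : ℝ), 0 < R → ν (ball x R) < ⊤)
    (x₀ : X) (m : ℝ) : TotallyBounded (ball x₀ m) := by
  classical
  rcases le_or_gt m 0 with hm | hm
  · rw [ball_eq_empty.2 hm]; exact totallyBounded_empty
  by_contra hTB
  rw [totallyBounded_iff] at hTB
  push_neg at hTB
  obtain ⟨ε, hε, hne⟩ := hTB
  have key : ∀ t : Finset X, ∃ z, z ∈ ball x₀ m ∧ ∀ y ∈ t, ε ≤ dist z y := by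
    intro t
    have h1 := hne t t.finite_toSet
    rw [Set.not_subset] at h1
    obtain ⟨z, hz, hz2⟩ := h1
    refine ⟨z, hz, fun y hy => ?_⟩
    by_contra h
    push_neg at h
    exact hz2 (Set.mem_biUnion hy (by simpa [mem_ball] using h))
  choose F hF1 hF2 using key
  let v : ℕ → Finset X := fun n => Nat.rec ∅ (fun _ t => insert (F t) t) n
  let u : ℕ → X := fun n => F (v n)
  have hv : ∀ n, v (n + 1) = insert (u n) (v n) := fun n => rfl
  have hmem : ∀ i n, i < n → u i ∈ v n := by
    intro i n h
    induction n with
    | zero => omega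
    | succ n ih =>
      rw [hv]
      rcases Nat.lt_succ_iff_lt_or_eq.mp h with h' | h'
      · exact Finset.mem_insert_of_mem (ih h')
      · exact h' ▸ Finset.mem_insert_self _ _
  have hball : ∀ n, u n ∈ ball x₀ m := fun n => hF1 (v n)
  have hsep : ∀ i j, i < j → ε ≤ dist (u j) (u i) := fun i j h => hF2 (v j) (u i) (hmem i j h)
  have hc0 : c ≠ 0 := by
    intro h
    have h1 := hdb x₀ m hm
    rw [h, zero_mul] at h1
    have h2 : ν (ball x₀ m) ≤ ν (ball x₀ (2 * m)) :=
      measure_mono (ball_subset_ball (by linarith))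
    exact (hpos x₀ m hm).ne' (le_antisymm (h2.trans h1) zero_le)
  obtain ⟨k, hk⟩ := pow_unbounded_of_one_lt (R := ℝ) (4 * m / ε) one_lt_two
  have hk' : 2 * m ≤ 2 ^ k * (ε / 2) := by
    rw [div_lt_iff₀ hε] at hk
    nlinarith
  set δ : ℝ≥0∞ := ν (ball x₀ m) / c ^ k with hδdef
  have hδ0 : δ ≠ 0 := by
    rw [hδdef]
    simp only [ne_eq, ENNReal.div_eq_zero_iff, not_or]
    exact ⟨(hpos x₀ m hm).ne', ENNReal.pow_ne_top hc⟩
  have hδt : δ ≠ ⊤ := (ENNReal.div_lt_top (hfin x₀ m hm).ne (pow_ne_zero k hc0)).ne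
  have hδle : ∀ n, δ ≤ ν (ball (u n) (ε / 2)) := by
    intro n
    have hsub : ball x₀ m ⊆ ball (u n) (2 ^ k * (ε / 2)) := by
      intro z hz
      have h2 := mem_ball.mp hz
      have h3 := mem_ball.mp (hball n)
      rw [mem_ball]
      calc dist z (u n) ≤ dist z x₀ + dist x₀ (u n) := dist_triangle _ _ _
        _ < m + m := by rw [dist_comm x₀ (u n)]; linarith
        _ ≤ 2 ^ k * (ε / 2) := by linarith
    have h1 : ν (ball x₀ m) ≤ ν (ball (u n) (2 ^ k * (ε / 2))) := measure_mono hsub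
    have h2 := doubling_iterate ν c hdb k (u n) (ε / 2) (by positivity)
    rw [hδdef, ENNReal.div_le_iff (pow_ne_zero k hc0) (ENNReal.pow_ne_top hc)]
    calc ν (ball x₀ m) ≤ ν (ball (u n) (2 ^ k * (ε / 2))) := h1
      _ ≤ c ^ k * ν (ball (u n) (ε / 2)) := h2
      _ = ν (ball (u n) (ε / 2)) * c ^ k := mul_comm _ _
  have hfin2 : ν (ball x₀ (m + ε)) ≠ ⊤ := (hfin x₀ (m + ε) (by linarith)).ne
  obtain ⟨N, hN⟩ := ENNReal.exists_nat_gt (ENNReal.div_lt_top hfin2 hδ0).ne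
  have hN' : ν (ball x₀ (m + ε)) < N * δ := by
    rwa [ENNReal.div_lt_iff (Or.inl hδ0) (Or.inl hδt)] at hN
  have hdisj : (↑(Finset.range N) : Set ℕ).PairwiseDisjoint fun n => ball (u n) (ε / 2) := by
    intro i _ j _ hij
    rcases hij.lt_or_gt with h | h
    · exact ball_disjoint_ball (by rw [dist_comm]; linarith [hsep i j h])
    · exact ball_disjoint_ball (by linarith [hsep j i h])
  have hunion : (⋃ n ∈ Finset.range N, ball (u n) (ε / 2)) ⊆ ball x₀ (m + ε) := by
    intro w hw
    simp only [Set.mem_iUnion] at hw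
    obtain ⟨n, _, hw⟩ := hw
    have h1 := mem_ball.mp hw
    have h2 := mem_ball.mp (hball n)
    rw [mem_ball]
    calc dist w x₀ ≤ dist w (u n) + dist (u n) x₀ := dist_triangle _ _ _
      _ < ε / 2 + m := by linarith
      _ ≤ m + ε := by linarith
  have hsum : (N : ℝ≥0∞) * δ ≤ ν (ball x₀ (m + ε)) := by
    calc (N : ℝ≥0∞) * δ = ∑ _n ∈ Finset.range N, δ := by
          rw [Finset.sum_const, Finset.card_range, nsmul_eq_mul]
      _ ≤ ∑ n ∈ Finset.range N, ν (ball (u n) (ε / 2)) :=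
          Finset.sum_le_sum fun n _ => hδle n
      _ = ν (⋃ n ∈ Finset.range N, ball (u n) (ε / 2)) :=
          (measure_biUnion_finset hdisj fun n _ => measurableSet_ball).symm
      _ ≤ ν (ball x₀ (m + ε)) := measure_mono hunion
  exact absurd hN' (not_lt.mpr hsum)

set_option maxHeartbeats 1000000 in
/-- Uniform bound on the BBM difference quotient for functions satisfying a Hajlasz-type
inequality, on a metric measure space with a doubling measure. -/
theorem bbm_quotient_le_of_hajlasz
    {X : Type*} [MetricSpace X] [MeasurableSpace X] [OpensMeasurableSpace X]
    (ν : Measure X) (c_D : ℝ)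
    (hdouble : ∀ (x : X) (r : ℝ), 0 < r →
      0 < ν (ball x r) ∧ ν (ball x (2 * r)) ≤ ENNReal.ofReal c_D * ν (ball x r) ∧
        ν (ball x (2 * r)) < ⊤)
    (p : ℝ) (hp : 1 < p) (f g : X → ℝ)
    (hf : MemLp f (ENNReal.ofReal p) ν) (hg : MemLp g (ENNReal.ofReal p) ν)
    (hg0 : ∀ x, 0 ≤ g x)
    (hajlasz : ∀ᵐ z ∂(ν.prod ν), |f z.1 - f z.2| ≤ dist z.1 z.2 * (g z.1 + g z.2))
    (r : ℝ) (hr : 0 < r) :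
    (1 / r ^ p) *
        ∫ x, ((ν (ball x r)).toReal⁻¹ * ∫ y in ball x r, |f y - f x| ^ p ∂ν) ∂ν ≤
      2 ^ (p - 1) * (1 + c_D) * ∫ x, g x ^ p ∂ν := by
  have hp1 : (1 : ℝ) ≤ p := hp.le
  have hp0 : (0 : ℝ) < p := lt_trans one_pos hp
  have hgp_nonneg : ∀ x, (0 : ℝ) ≤ g x ^ p := fun x => Real.rpow_nonneg (hg0 x) p
  have hint_gp : (0 : ℝ) ≤ ∫ x, g x ^ p ∂ν := integral_nonneg hgp_nonneg
  rcases isEmpty_or_nonempty X with hX | hX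
  · rw [Measure.eq_zero_of_isEmpty ν]
    simp
  obtain ⟨x₀⟩ := hX
  -- basic consequences of doubling
  have hpos : ∀ (x : X) (R : ℝ), 0 < R → 0 < ν (ball x R) := fun x R hR => (hdouble x R hR).1
  have hfin : ∀ (x : X) (R : ℝ), 0 < R → ν (ball x R) < ⊤ := fun x R hR =>
    lt_of_le_of_lt (measure_mono (ball_subset_ball (by linarith))) (hdouble x R hR).2.2
  set c : ℝ≥0∞ := ENNReal.ofReal c_D with hcdef
  have hdb : ∀ (x : X) (R : ℝ), 0 < R → ν (ball x (2 * R)) ≤ c * ν (ball x R) := fun x R hR =>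
    (hdouble x R hR).2.1
  have hc_ne_top : c ≠ ⊤ := ENNReal.ofReal_ne_top
  have hc1 : (1 : ℝ≥0∞) ≤ c := by
    have h2 : ν (ball x₀ 1) ≤ c * ν (ball x₀ 1) :=
      le_trans (measure_mono (ball_subset_ball (by norm_num))) (hdb x₀ 1 one_pos)
    by_contra h
    push_neg at h
    have h3 : c * ν (ball x₀ 1) < 1 * ν (ball x₀ 1) :=
      by rw [mul_comm c, mul_comm 1]; exact ENNReal.mul_lt_mul_right (hpos x₀ 1 one_pos).ne' (hfin x₀ 1 one_pos).ne h
    rw [one_mul] at h3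
    exact absurd (lt_of_le_of_lt h2 h3) (lt_irrefl _)
  have hc0 : c ≠ 0 := fun h => by simp [h] at hc1
  have hcD1 : (1 : ℝ) ≤ c_D := ENNReal.one_le_ofReal.mp hc1
  -- sigma-finiteness
  haveI : SigmaFinite ν := by
    refine ⟨⟨{ set := fun n => ball x₀ (n + 1), set_mem := fun _ => trivial,
               finite := fun n => hfin x₀ (n + 1) (by positivity), spanning := ?_ }⟩⟩
    rw [Set.eq_univ_iff_forall]
    intro z
    obtain ⟨n, hn⟩ := exists_nat_gt (dist z x₀)
    exact Set.mem_iUnion.2 ⟨n, mem_ball.2 (by linarith)⟩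
  -- separability and second countability
  haveI : SeparableSpace X := by
    rw [← TopologicalSpace.isSeparable_univ_iff]
    rw [← iUnion_ball_nat x₀]
    exact IsSeparable.iUnion fun n =>
      (totallyBounded_ball_of_doubling ν c hc_ne_top hpos hdb hfin x₀ n).isSeparable
  haveI : SecondCountableTopology X := UniformSpace.secondCountable_of_separable X
  -- measurability of the ball relation and of x ↦ ν (ball x r)
  have hS : MeasurableSet {z : X × X | dist z.1 z.2 < r} :=
    measurableSet_lt measurable_dist measurable_const
  have hmeasν : Measurable fun x : X => ν (ball x r) := by
    have heq : ∀ x : X, ball x r = Prod.mk x ⁻¹' {z : X × X | dist z.1 z.2 < r} := by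
      intro x; ext y; simp [Metric.mem_ball, dist_comm]
    simp_rw [heq]
    exact measurable_measure_prodMk_left hS
  -- measurable nonnegative version of g
  set g₁ : X → ℝ := fun x => max (hg.1.mk g x) 0 with hg₁def
  have hg₁meas : Measurable g₁ := hg.1.measurable_mk.max measurable_const
  have hg₁ae : g =ᵐ[ν] g₁ := by
    filter_upwards [hg.1.ae_eq_mk] with x hx
    rw [hg₁def]
    simp only [← hx]
    exact (max_eq_left (hg0 x)).symm
  have hg₁0 : ∀ x, 0 ≤ g₁ x := fun x => le_max_right _ _
  set Φ : X → ℝ≥0∞ := fun x => ENNReal.ofReal (g₁ x) with hΦdef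
  have hΦmeas : Measurable Φ := ENNReal.measurable_ofReal.comp hg₁meas
  have hΦpmeas : Measurable fun x => Φ x ^ p := hΦmeas.pow measurable_const
  set M : ℝ≥0∞ := ∫⁻ x, Φ x ^ p ∂ν with hMdef
  have hΦp_eq : ∀ x, Φ x ^ p = ENNReal.ofReal (g₁ x ^ p) := fun x =>
    ENNReal.ofReal_rpow_of_nonneg (hg₁0 x) hp0.le
  have hM_eq : ∫⁻ x, ENNReal.ofReal (g x ^ p) ∂ν = M := by
    rw [hMdef]
    refine lintegral_congr_ae ?_
    filter_upwards [hg₁ae] with x hx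
    rw [hΦp_eq, hx]
  -- integrability of g ^ p
  have hgp_int : Integrable (fun x => g x ^ p) ν := by
    have h1 := hg.integrable_norm_rpow (by simp [hp0]) (by simp)
    simpa [Real.norm_eq_abs, abs_of_nonneg (hg0 _), ENNReal.toReal_ofReal hp0.le] using h1
  have hM_lt : M < ⊤ := by
    rw [← hM_eq]
    exact (hasFiniteIntegral_iff_ofReal (ae_of_all _ hgp_nonneg)).1 hgp_int.2
  have hgp_int_eq : ∫ x, g x ^ p ∂ν = M.toReal := by
    rw [integral_eq_lintegral_of_nonneg_ae (ae_of_all _ hgp_nonneg) hgp_int.1, hM_eq]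
  -- abbreviations
  set R2 : ℝ≥0∞ := ENNReal.ofReal r ^ p * 2 ^ (p - 1) with hR2def
  have hR2_ne_top : R2 ≠ ⊤ := by
    rw [hR2def]
    exact ENNReal.mul_ne_top
      (ENNReal.rpow_lt_top_of_nonneg hp0.le ENNReal.ofReal_ne_top).ne
      (ENNReal.rpow_lt_top_of_nonneg (by linarith) (by norm_num)).ne
  -- inner lintegrals
  set I : X → ℝ≥0∞ := fun x => ∫⁻ y in ball x r, ENNReal.ofReal (|f y - f x| ^ p) ∂ν with hIdef
  set J : X → ℝ≥0∞ := fun x => ∫⁻ y in ball x r, Φ y ^ p ∂ν with hJdef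
  have haj : ∀ᵐ x ∂ν, ∀ᵐ y ∂ν, |f x - f y| ≤ dist x y * (g x + g y) :=
    Measure.ae_ae_of_ae_prod hajlasz
  have key1 : ∀ᵐ x ∂ν, I x ≤ R2 * (ν (ball x r) * Φ x ^ p + J x) := by
    filter_upwards [haj, hg₁ae] with x hx hgx
    have hae : ∀ᵐ y ∂(ν.restrict (ball x r)),
        ENNReal.ofReal (|f y - f x| ^ p) ≤ R2 * (Φ x ^ p + Φ y ^ p) := by
      filter_upwards [ae_restrict_of_ae hx, ae_restrict_of_ae hg₁ae,
        ae_restrict_mem measurableSet_ball] with y h1y h2y hyball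
      have hd : dist x y < r := by rw [dist_comm]; exact mem_ball.mp hyball
      have hgxy : 0 ≤ g x + g y := add_nonneg (hg0 x) (hg0 y)
      have hb : |f y - f x| ≤ r * (g₁ x + g₁ y) := by
        rw [abs_sub_comm]
        calc |f x - f y| ≤ dist x y * (g x + g y) := h1y
          _ ≤ r * (g x + g y) := mul_le_mul_of_nonneg_right hd.le hgxy
          _ = r * (g₁ x + g₁ y) := by rw [hgx, h2y]
      have e1 : ENNReal.ofReal (|f y - f x| ^ p) = ENNReal.ofReal |f y - f x| ^ p :=
        (ENNReal.ofReal_rpow_of_nonneg (abs_nonneg _) hp0.le).symm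
      rw [e1]
      calc ENNReal.ofReal |f y - f x| ^ p
          ≤ ENNReal.ofReal (r * (g₁ x + g₁ y)) ^ p :=
            ENNReal.rpow_le_rpow (ENNReal.ofReal_le_ofReal hb) hp0.le
        _ = (ENNReal.ofReal r * (Φ x + Φ y)) ^ p := by
            rw [ENNReal.ofReal_mul hr.le, ENNReal.ofReal_add (hg₁0 x) (hg₁0 y)]
        _ = ENNReal.ofReal r ^ p * (Φ x + Φ y) ^ p := ENNReal.mul_rpow_of_nonneg _ _ hp0.le
        _ ≤ ENNReal.ofReal r ^ p * (2 ^ (p - 1) * (Φ x ^ p + Φ y ^ p)) :=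
            mul_le_mul_right (ENNReal.rpow_add_le_mul_rpow_add_rpow _ _ hp1) _
        _ = R2 * (Φ x ^ p + Φ y ^ p) := by rw [hR2def, mul_assoc]
    simp only [hIdef, hJdef]
    calc (∫⁻ y in ball x r, ENNReal.ofReal (|f y - f x| ^ p) ∂ν)
        ≤ ∫⁻ y in ball x r, R2 * (Φ x ^ p + Φ y ^ p) ∂ν := lintegral_mono_ae hae
      _ = R2 * (ν (ball x r) * Φ x ^ p + ∫⁻ y in ball x r, Φ y ^ p ∂ν) := by
          rw [lintegral_const_mul' _ _ hR2_ne_top,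
            lintegral_add_left measurable_const,
            setLIntegral_const]
          ring_nf
  have key2 : ∀ᵐ x ∂ν,
      (ν (ball x r))⁻¹ * I x ≤ R2 * Φ x ^ p + R2 * ((ν (ball x r))⁻¹ * J x) := by
    filter_upwards [key1] with x hx
    have h0 : ν (ball x r) ≠ 0 := (hpos x r hr).ne'
    have ht : ν (ball x r) ≠ ⊤ := (hfin x r hr).ne
    calc (ν (ball x r))⁻¹ * I x
        ≤ (ν (ball x r))⁻¹ * (R2 * (ν (ball x r) * Φ x ^ p + J x)) := mul_le_mul_right hx _
      _ = R2 * ((ν (ball x r))⁻¹ * ν (ball x r)) * Φ x ^ p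
            + R2 * ((ν (ball x r))⁻¹ * J x) := by ring
      _ = R2 * Φ x ^ p + R2 * ((ν (ball x r))⁻¹ * J x) := by
          rw [ENNReal.inv_mul_cancel h0 ht, mul_one]
  -- Fubini step
  set k : X → ℝ≥0∞ := fun y => c * ((ν (ball y r))⁻¹ * Φ y ^ p) with hkdef
  have hkmeas : Measurable k := measurable_const.mul (hmeasν.inv.mul hΦpmeas)
  have hstepa : ∀ x, (ν (ball x r))⁻¹ * J x ≤ ∫⁻ y in ball x r, k y ∂ν := by
    intro x
    have h0x : ν (ball x r) ≠ 0 := (hpos x r hr).ne'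
    have htx : ν (ball x r) ≠ ⊤ := (hfin x r hr).ne
    have hinvt : (ν (ball x r))⁻¹ ≠ ⊤ := by simp [h0x]
    simp only [hJdef]
    rw [← lintegral_const_mul' _ _ hinvt]
    refine lintegral_mono_ae ?_
    filter_upwards [ae_restrict_mem measurableSet_ball] with y hy
    have hsub : ball y r ⊆ ball x (2 * r) := by
      intro w hw
      rw [mem_ball] at hw ⊢
      have := mem_ball.mp hy
      calc dist w x ≤ dist w y + dist y x := dist_triangle _ _ _
        _ < r + r := by linarith
        _ = 2 * r := by ring
    have h1 : ν (ball y r) ≤ c * ν (ball x r) := le_trans (measure_mono hsub) (hdb x r hr)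
    have hy0 : ν (ball y r) ≠ 0 := (hpos y r hr).ne'
    have hyt : ν (ball y r) ≠ ⊤ := (hfin y r hr).ne
    have hinv : (ν (ball x r))⁻¹ ≤ c * (ν (ball y r))⁻¹ := by
      calc (ν (ball x r))⁻¹ = (ν (ball y r))⁻¹ * ν (ball y r) * (ν (ball x r))⁻¹ := by
            rw [ENNReal.inv_mul_cancel hy0 hyt, one_mul]
        _ ≤ (ν (ball y r))⁻¹ * (c * ν (ball x r)) * (ν (ball x r))⁻¹ := by gcongr
        _ = c * (ν (ball y r))⁻¹ * (ν (ball x r) * (ν (ball x r))⁻¹) := by ring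
        _ = c * (ν (ball y r))⁻¹ := by rw [ENNReal.mul_inv_cancel h0x htx, mul_one]
    calc (ν (ball x r))⁻¹ * Φ y ^ p ≤ c * (ν (ball y r))⁻¹ * Φ y ^ p :=
          mul_le_mul_left hinv _
      _ = k y := by simp only [hkdef]; ring
  set K : X → X → ℝ≥0∞ := fun x y =>
    ({z : X × X | dist z.1 z.2 < r}).indicator (fun z => k z.2) (x, y) with hKdef
  have hKu : Measurable (Function.uncurry K) := by
    have h1 : Function.uncurry K
        = ({z : X × X | dist z.1 z.2 < r}).indicator (fun z => k z.2) := rfl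
    rw [h1]
    exact (hkmeas.comp measurable_snd).indicator hS
  have hinner : ∀ x, ∫⁻ y in ball x r, k y ∂ν = ∫⁻ y, K x y ∂ν := by
    intro x
    rw [← lintegral_indicator measurableSet_ball]
    refine lintegral_congr fun y => ?_
    simp only [hKdef]
    by_cases hy : y ∈ ball x r
    · rw [Set.indicator_of_mem hy, Set.indicator_of_mem]
      show dist x y < r
      rw [dist_comm]; exact mem_ball.mp hy
    · rw [Set.indicator_of_notMem hy, Set.indicator_of_notMem]
      intro h
      exact hy (mem_ball.2 (by rw [dist_comm]; exact h))
  have hswap : ∫⁻ x, ∫⁻ y, K x y ∂ν ∂ν = ∫⁻ y, ∫⁻ x, K x y ∂ν ∂ν :=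
    lintegral_lintegral_swap hKu.aemeasurable
  have hinner2 : ∀ y, ∫⁻ x, K x y ∂ν = k y * ν (ball y r) := by
    intro y
    have h1 : (fun x => K x y) = (ball y r).indicator fun _ => k y := by
      funext x
      simp only [hKdef]
      by_cases hx : x ∈ ball y r
      · rw [Set.indicator_of_mem hx]
        exact Set.indicator_of_mem
          (show ((x, y) : X × X) ∈ {z : X × X | dist z.1 z.2 < r} from mem_ball.mp hx) _
      · rw [Set.indicator_of_notMem hx, Set.indicator_of_notMem]
        exact fun h => hx (mem_ball.2 h)
    rw [h1, lintegral_indicator measurableSet_ball, setLIntegral_const]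
  have hTT : ∫⁻ x, (ν (ball x r))⁻¹ * J x ∂ν ≤ c * M := by
    calc ∫⁻ x, (ν (ball x r))⁻¹ * J x ∂ν ≤ ∫⁻ x, ∫⁻ y in ball x r, k y ∂ν ∂ν :=
          lintegral_mono hstepa
      _ = ∫⁻ x, ∫⁻ y, K x y ∂ν ∂ν := lintegral_congr hinner
      _ = ∫⁻ y, ∫⁻ x, K x y ∂ν ∂ν := hswap
      _ = ∫⁻ y, k y * ν (ball y r) ∂ν := lintegral_congr hinner2
      _ = ∫⁻ y, c * Φ y ^ p ∂ν := by
          refine lintegral_congr fun y => ?_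
          have hy0 : ν (ball y r) ≠ 0 := (hpos y r hr).ne'
          have hyt : ν (ball y r) ≠ ⊤ := (hfin y r hr).ne
          simp only [hkdef]
          calc c * ((ν (ball y r))⁻¹ * Φ y ^ p) * ν (ball y r)
              = c * Φ y ^ p * ((ν (ball y r))⁻¹ * ν (ball y r)) := by ring
            _ = c * Φ y ^ p := by rw [ENNReal.inv_mul_cancel hy0 hyt, mul_one]
      _ = c * M := by rw [lintegral_const_mul' _ _ hc_ne_top, hMdef]
  have hLHSlin : ∫⁻ x, (ν (ball x r))⁻¹ * I x ∂ν ≤ R2 * (1 + c) * M := by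
    calc ∫⁻ x, (ν (ball x r))⁻¹ * I x ∂ν
        ≤ ∫⁻ x, (R2 * Φ x ^ p + R2 * ((ν (ball x r))⁻¹ * J x)) ∂ν := lintegral_mono_ae key2
      _ = R2 * M + R2 * ∫⁻ x, (ν (ball x r))⁻¹ * J x ∂ν := by
          rw [lintegral_add_left (f := fun x => R2 * Φ x ^ p) (measurable_const.mul hΦpmeas),
            lintegral_const_mul' _ _ hR2_ne_top, lintegral_const_mul' _ _ hR2_ne_top, hMdef]
      _ ≤ R2 * M + R2 * (c * M) := add_le_add_right (mul_le_mul_right hTT R2) _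
      _ = R2 * (1 + c) * M := by ring
  -- back to Bochner integrals
  have hRHSlin_ne_top : R2 * (1 + c) * M ≠ ⊤ :=
    ENNReal.mul_ne_top (ENNReal.mul_ne_top hR2_ne_top (by simp [hc_ne_top])) hM_lt.ne
  by_cases hHm : AEStronglyMeasurable
      (fun x => (ν (ball x r)).toReal⁻¹ * ∫ y in ball x r, |f y - f x| ^ p ∂ν) ν
  swap
  · rw [integral_non_aestronglyMeasurable hHm, mul_zero]
    have h1 : (0 : ℝ) ≤ 2 ^ (p - 1) := Real.rpow_nonneg (by norm_num) _
    have h2 : (0 : ℝ) ≤ 1 + c_D := by linarith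
    exact mul_nonneg (mul_nonneg h1 h2) hint_gp
  · have hH0 : ∀ x, 0 ≤ (ν (ball x r)).toReal⁻¹ * ∫ y in ball x r, |f y - f x| ^ p ∂ν :=
      fun x => mul_nonneg (inv_nonneg.2 ENNReal.toReal_nonneg)
        (integral_nonneg fun y => Real.rpow_nonneg (abs_nonneg _) _)
    rw [integral_eq_lintegral_of_nonneg_ae (ae_of_all _ hH0) hHm]
    have hfm : ∀ x : X, AEStronglyMeasurable (fun y => |f y - f x| ^ p)
        (ν.restrict (ball x r)) := by
      intro x
      have h0 : AEMeasurable (fun y => f y - f x) (ν.restrict (ball x r)) :=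
        hf.1.restrict.aemeasurable.sub aemeasurable_const
      exact ((measurable_abs.comp_aemeasurable h0).pow aemeasurable_const).aestronglyMeasurable
    have hinner_eq : ∀ x, ∫ y in ball x r, |f y - f x| ^ p ∂ν = (I x).toReal := by
      intro x
      rw [integral_eq_lintegral_of_nonneg_ae
        (ae_of_all _ fun y => Real.rpow_nonneg (abs_nonneg _) _) (hfm x)]
    have hle : (∫⁻ x, ENNReal.ofReal
          ((ν (ball x r)).toReal⁻¹ * ∫ y in ball x r, |f y - f x| ^ p ∂ν) ∂ν)
        ≤ R2 * (1 + c) * M := by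
      refine le_trans (lintegral_mono fun x => ?_) hLHSlin
      rw [hinner_eq x, ← ENNReal.toReal_inv, ← ENNReal.toReal_mul]
      exact ENNReal.ofReal_toReal_le
    have hfinal := ENNReal.toReal_mono hRHSlin_ne_top hle
    have hRHSval : (R2 * (1 + c) * M).toReal = r ^ p * (2 ^ (p - 1) * ((1 + c_D) * M.toReal)) := by
      rw [ENNReal.toReal_mul, ENNReal.toReal_mul, hR2def, ENNReal.toReal_mul,
        ← ENNReal.toReal_rpow, ← ENNReal.toReal_rpow,
        ENNReal.toReal_ofReal hr.le, ENNReal.toReal_add ENNReal.one_ne_top hc_ne_top,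
        ENNReal.toReal_one, hcdef, ENNReal.toReal_ofReal (by linarith : (0:ℝ) ≤ c_D)]
      norm_num
      ring
    calc (1 / r ^ p) * (∫⁻ x, ENNReal.ofReal
            ((ν (ball x r)).toReal⁻¹ * ∫ y in ball x r, |f y - f x| ^ p ∂ν) ∂ν).toReal
        ≤ (1 / r ^ p) * (R2 * (1 + c) * M).toReal := by
          have hrp : (0:ℝ) < r ^ p := Real.rpow_pos_of_pos hr p
          exact mul_le_mul_of_nonneg_left hfinal (by positivity)
      _ = 2 ^ (p - 1) * (1 + c_D) * ∫ x, g x ^ p ∂ν := by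
          rw [hRHSval, hgp_int_eq]
          have hrp : r ^ p ≠ 0 := (Real.rpow_pos_of_pos hr p).ne'
          field_simp
end

section
/- Let f : ℝ^N → ℝ be an L-Lipschitz function with f ∈ W^{1,p}(ℝ^N) for p ∈ (1,∞). Then lim_{r→0} (1/r^p) ∫_{ℝ^N} (1/ℒ^N(B(x,r))) ∫_{B(x,r)} |f(x) − f(y)|^p dℒ^N(y) dℒ^N(x) = C_{p,N} ∫_{ℝ^N} |∇f|^p dℒ^N, where C_{p,N} = (1/ℒ^N(B(0,1))) ∫_{B(0,1)} |z·e₁|^p dℒ^N(z). -/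
open MeasureTheory Metric Filter

/-- FTC for Lipschitz functions on `ℝ`, proved by dominated convergence on
difference quotients. -/
lemma lipschitz_ftc {C : NNReal} {g : ℝ → ℝ} (hg : LipschitzWith C g) :
    ∫ t in Set.Ioc (0:ℝ) 1, deriv g t = g 1 - g 0 := by
  have hgc : Continuous g := hg.continuous
  set h : ℕ → ℝ := fun n => ((n : ℝ) + 1)⁻¹ with hh
  have hpos : ∀ n, 0 < h n := fun n => by positivity
  have hto : Tendsto h atTop (nhds 0) := tendsto_one_div_add_atTop_nhds_zero_nat.congr
    (by intro n; simp [hh, one_div])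
  set q : ℕ → ℝ → ℝ := fun n t => (g (t + h n) - g t) / h n with hq
  -- pointwise convergence a.e.
  have hae : ∀ᵐ t ∂(volume.restrict (Set.Ioc (0:ℝ) 1)),
      Tendsto (fun n => q n t) atTop (nhds (deriv g t)) := by
    refine ae_restrict_of_ae ?_
    filter_upwards [hg.ae_differentiableAt_of_real] with t ht
    have hd : HasDerivAt g (deriv g t) t := ht.hasDerivAt
    have hslope := hasDerivAt_iff_tendsto_slope.1 hd
    have htend : Tendsto (fun n => t + h n) atTop (nhdsWithin t {t}ᶜ) := by
      rw [tendsto_nhdsWithin_iff]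
      constructor
      · simpa using (tendsto_const_nhds.add hto)
      · filter_upwards with n
        simp only [Set.mem_compl_iff, Set.mem_singleton_iff]
        have := (hpos n).ne'
        intro hcon
        exact this (by linarith [hcon])
    have := hslope.comp htend
    refine this.congr fun n => ?_
    simp [slope_def_field, hq, div_eq_inv_mul]
  -- dominated convergence
  have hbound : ∀ n, ∀ᵐ t ∂(volume.restrict (Set.Ioc (0:ℝ) 1)), ‖q n t‖ ≤ (C : ℝ) := by
    intro n
    filter_upwards with t
    have hle : |g (t + h n) - g t| ≤ (C:ℝ) * h n := by
      have := hg.dist_le_mul (t + h n) t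
      simp only [Real.dist_eq] at this
      simpa [abs_of_pos (hpos n)] using this
    rw [Real.norm_eq_abs, hq]
    rw [abs_div, abs_of_pos (hpos n)]
    rw [div_le_iff₀ (hpos n)]
    simpa using hle
  have hmeas : ∀ n, AEStronglyMeasurable (q n) (volume.restrict (Set.Ioc (0:ℝ) 1)) :=
    fun n => (((hgc.comp (continuous_id.add continuous_const)).sub hgc).div_const _).aestronglyMeasurable
  have hderivmeas : AEStronglyMeasurable (deriv g) (volume.restrict (Set.Ioc (0:ℝ) 1)) :=
    (measurable_deriv g).aestronglyMeasurable
  have hint : Integrable (fun _ : ℝ => (C : ℝ)) (volume.restrict (Set.Ioc (0:ℝ) 1)) :=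
    integrable_const _
  have hDCT := tendsto_integral_of_dominated_convergence _ hmeas hint hbound hae
  -- compute the integrals of q n
  have hcomp : ∀ n, ∫ t in Set.Ioc (0:ℝ) 1, q n t
      = ((∫ t in (1:ℝ)..(1 + h n), g t) - ∫ t in (0:ℝ)..(h n), g t) / h n := by
    intro n
    have h1 : ∫ t in Set.Ioc (0:ℝ) 1, q n t = ∫ t in (0:ℝ)..1, q n t := by
      rw [intervalIntegral.integral_of_le zero_le_one]
    rw [h1, hq]
    have hgint : ∀ a b : ℝ, IntervalIntegrable g volume a b := fun a b =>
      hgc.intervalIntegrable a b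
    have hgint' : ∀ a b : ℝ, IntervalIntegrable (fun t => g (t + h n)) volume a b := fun a b =>
      (hgc.comp (continuous_id.add continuous_const)).intervalIntegrable a b
    simp only [div_eq_mul_inv]
    rw [intervalIntegral.integral_mul_const]
    congr 1
    rw [intervalIntegral.integral_sub (hgint' 0 1) (hgint 0 1)]
    have h2 : ∫ t in (0:ℝ)..1, g (t + h n) = ∫ t in (h n)..(1 + h n), g t := by
      simpa using intervalIntegral.integral_comp_add_right (a := (0:ℝ)) (b := 1) g (h n)
    rw [h2]
    have h3 : ∫ t in (h n)..(1+h n), g t = (∫ t in (h n)..(1:ℝ), g t) + ∫ t in (1:ℝ)..(1+h n), g t :=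
      (intervalIntegral.integral_add_adjacent_intervals (hgint _ _) (hgint _ _)).symm
    have h4 : ∫ t in (0:ℝ)..(1:ℝ), g t = (∫ t in (0:ℝ)..(h n), g t) + ∫ t in (h n)..(1:ℝ), g t :=
      (intervalIntegral.integral_add_adjacent_intervals (hgint _ _) (hgint _ _)).symm
    rw [h3, h4]
    ring
  -- limit of boundary terms
  have hbdry : ∀ (c : ℝ), Tendsto (fun n => (∫ t in c..(c + h n), g t) / h n) atTop (nhds (g c)) := by
    intro c
    have key : ∀ n, |(∫ t in c..(c + h n), g t) / h n - g c| ≤ (C:ℝ) * h n := by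
      intro n
      have hgc' : ∫ t in c..(c + h n), (g c) = h n * g c := by simp
      have : (∫ t in c..(c + h n), g t) - h n * g c = ∫ t in c..(c + h n), (g t - g c) := by
        rw [intervalIntegral.integral_sub (hgc.intervalIntegrable _ _)
          (intervalIntegrable_const), hgc']
      have hb : ∀ t ∈ Set.uIoc c (c + h n), ‖g t - g c‖ ≤ (C:ℝ) * h n := by
        intro t ht
        rw [Set.uIoc_of_le (by linarith [hpos n])] at ht
        have := hg.dist_le_mul t c
        simp only [Real.dist_eq] at this
        rw [Real.norm_eq_abs]
        refine this.trans ?_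
        have h1 : |t - c| ≤ h n := by
          rw [abs_le]
          constructor
          · linarith [ht.1, (hpos n).le]
          · linarith [ht.2]
        exact mul_le_mul_of_nonneg_left h1 C.coe_nonneg
      have hnorm := intervalIntegral.norm_integral_le_of_norm_le_const hb
      have e1 : (∫ t in c..(c + h n), g t) / h n - g c
          = (∫ t in c..(c + h n), (g t - g c)) / h n := by
        rw [← this, sub_div, mul_div_cancel_left₀ _ (hpos n).ne']
      rw [e1, abs_div, abs_of_pos (hpos n), div_le_iff₀ (hpos n)]
      calc |∫ t in c..(c + h n), (g t - g c)|
          = ‖∫ t in c..(c + h n), (g t - g c)‖ := (Real.norm_eq_abs _).symm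
        _ ≤ (C:ℝ) * h n * |c + h n - c| := hnorm
        _ ≤ (C:ℝ) * h n * h n := by
            rw [show c + h n - c = h n by ring, abs_of_pos (hpos n)]
    have h0 : Tendsto (fun n => (C:ℝ) * h n) atTop (nhds 0) := by
      simpa using hto.const_mul (C:ℝ)
    have h1 : Tendsto (fun n => (∫ t in c..(c + h n), g t) / h n - g c) atTop (nhds 0) :=
      squeeze_zero_norm (fun n => by simpa using key n) h0
    have := h1.add (tendsto_const_nhds (x := g c))
    simpa using this
  have hlim2 : Tendsto (fun n => ∫ t in Set.Ioc (0:ℝ) 1, q n t) atTop (nhds (g 1 - g 0)) := by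
    simp only [hcomp]
    have hA := hbdry 1
    have hB := hbdry 0
    simp only [zero_add] at hB
    have := hA.sub hB
    refine this.congr fun n => ?_
    ring
  exact tendsto_nhds_unique hDCT hlim2

open scoped RealInnerProductSpace ENNReal

section Helpers

lemma cont_abs_rpow {p : ℝ} (hp : 0 < p) : Continuous fun t : ℝ => |t| ^ p := by
  rw [continuous_iff_continuousAt]
  intro t
  exact (Real.continuousAt_rpow_const _ _ (Or.inr hp.le)).comp continuous_abs.continuousAt

lemma convexOn_abs_rpow {p : ℝ} (hp : 1 ≤ p) :
    ConvexOn ℝ Set.univ (fun t : ℝ => |t| ^ p) := by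
  have himg : (abs '' (Set.univ : Set ℝ)) = Set.Ici (0:ℝ) := by
    rw [Set.image_univ]
    ext y
    simp only [Set.mem_range, Set.mem_Ici]
    constructor
    · rintro ⟨x, rfl⟩; exact abs_nonneg x
    · intro hy; exact ⟨y, abs_of_nonneg hy⟩
  have habs : ConvexOn ℝ (Set.univ : Set ℝ) abs := by
    have := convexOn_univ_norm (E := ℝ)
    exact this
  have hrpow : ConvexOn ℝ (abs '' (Set.univ : Set ℝ)) (fun t : ℝ => t ^ p) := by
    rw [himg]; exact convexOn_rpow hp
  have hmono : MonotoneOn (fun t : ℝ => t ^ p) (abs '' (Set.univ : Set ℝ)) := by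
    rw [himg]
    intro a ha b _ hab
    exact Real.rpow_le_rpow ha hab (by linarith)
  exact hrpow.comp habs hmono

end Helpers

section Euclid

variable {N : ℕ} {p : ℝ} {L : NNReal} {f : EuclideanSpace ℝ (Fin N) → ℝ}

local notation "E" => EuclideanSpace ℝ (Fin N)

instance : IsProbabilityMeasure (volume.restrict (Set.Ioc (0:ℝ) 1)) :=
  ⟨by simp⟩

/-- Chain rule + FTC + Jensen along a segment. -/
lemma bbm_line_bound (hp : 1 < p) (hf : LipschitzWith L f) (x z : E)
    (hx : ∀ᵐ t ∂(volume.restrict (Set.Ioc (0:ℝ) 1)), DifferentiableAt ℝ f (x + t • z)) :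
    |f (x + z) - f x| ^ p ≤ ∫ t in Set.Ioc (0:ℝ) 1, |fderiv ℝ f (x + t • z) z| ^ p := by
  set c : ℝ → E := fun t => x + t • z with hc
  have hcL : LipschitzWith ‖z‖₊ c := by
    refine LipschitzWith.of_dist_le_mul fun s t => ?_
    simp only [hc, dist_eq_norm]
    have : x + s • z - (x + t • z) = (s - t) • z := by
      rw [sub_smul]; abel
    rw [this, norm_smul, coe_nnnorm, mul_comm]
  set g : ℝ → ℝ := fun t => f (x + t • z) with hg
  have hgL : LipschitzWith (L * ‖z‖₊) g := hf.comp hcL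
  -- derivative of g a.e.
  have hderiv : ∀ᵐ t ∂(volume.restrict (Set.Ioc (0:ℝ) 1)),
      deriv g t = fderiv ℝ f (x + t • z) z := by
    filter_upwards [hx] with t ht
    have hct : HasDerivAt c z t := by
      have h1 : HasDerivAt (fun s : ℝ => s • z) ((1:ℝ) • z) t :=
        (hasDerivAt_id t).smul_const z
      simpa only [one_smul] using h1.const_add x
    have : HasDerivAt g (fderiv ℝ f (x + t • z) z) t := by
      have := ht.hasFDerivAt.comp_hasDerivAt t hct
      exact this
    exact this.deriv
  -- FTC
  have hftc : ∫ t in Set.Ioc (0:ℝ) 1, deriv g t = f (x + z) - f x := by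
    have := lipschitz_ftc hgL
    simpa [hg] using this
  have hftc2 : f (x + z) - f x = ∫ t in Set.Ioc (0:ℝ) 1, fderiv ℝ f (x + t • z) z := by
    rw [← hftc]
    exact integral_congr_ae hderiv
  -- integrability facts
  have humeas : Measurable fun t : ℝ => fderiv ℝ f (x + t • z) z := by
    have h1 : Measurable fun w : E => fderiv ℝ f w z := measurable_fderiv_apply_const ℝ f z
    exact h1.comp (hcL.continuous.measurable)
  have hubd : ∀ t : ℝ, ‖fderiv ℝ f (x + t • z) z‖ ≤ (L : ℝ) * ‖z‖ := by
    intro t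
    calc ‖fderiv ℝ f (x + t • z) z‖ ≤ ‖fderiv ℝ f (x + t • z)‖ * ‖z‖ :=
          (fderiv ℝ f (x + t • z)).le_opNorm z
      _ ≤ (L : ℝ) * ‖z‖ :=
          mul_le_mul_of_nonneg_right (norm_fderiv_le_of_lipschitz ℝ hf) (norm_nonneg z)
  have hfi : Integrable (fun t : ℝ => fderiv ℝ f (x + t • z) z)
      (volume.restrict (Set.Ioc (0:ℝ) 1)) :=
    ⟨humeas.aestronglyMeasurable, HasFiniteIntegral.of_bounded (ae_of_all _ hubd)⟩
  have hgi : Integrable (fun t : ℝ => |fderiv ℝ f (x + t • z) z| ^ p)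
      (volume.restrict (Set.Ioc (0:ℝ) 1)) := by
    refine ⟨((cont_abs_rpow (by linarith : (0:ℝ) < p)).measurable.comp
      humeas).aestronglyMeasurable, HasFiniteIntegral.of_bounded
        (C := ((L : ℝ) * ‖z‖) ^ p) (ae_of_all _ fun t => ?_)⟩
    rw [Real.norm_eq_abs, abs_of_nonneg (Real.rpow_nonneg (abs_nonneg _) p)]
    refine Real.rpow_le_rpow (abs_nonneg _) ?_ (by linarith)
    simpa [Real.norm_eq_abs] using hubd t
  -- Jensen
  have hjen := (convexOn_abs_rpow hp.le).map_integral_le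
    (μ := volume.restrict (Set.Ioc (0:ℝ) 1))
    (cont_abs_rpow (by linarith : (0:ℝ) < p)).continuousOn isClosed_univ
    (ae_of_all _ fun _ => Set.mem_univ _) hfi hgi
  rw [hftc2]
  exact hjen

/-- Along a.e. line in direction `z`, `f` is differentiable a.e. -/
lemma ae_ae_differentiable (hf : LipschitzWith L f) (z : E) :
    ∀ᵐ x : E, ∀ᵐ t ∂(volume.restrict (Set.Ioc (0:ℝ) 1)),
      DifferentiableAt ℝ f (x + t • z) := by
  set S : Set E := {w | DifferentiableAt ℝ f w} with hS
  have hSm : MeasurableSet S := measurableSet_of_differentiableAt ℝ f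
  have hnull : volume Sᶜ = 0 := by
    have := hf.ae_differentiableAt (μ := volume)
    rwa [MeasureTheory.ae_iff] at this
  set φ : E → ℝ≥0∞ := Sᶜ.indicator 1 with hφ
  have hφm : Measurable φ := measurable_const.indicator hSm.compl
  have haddm : Measurable fun q : E × ℝ => q.1 + q.2 • z :=
    (continuous_fst.add (continuous_snd.smul continuous_const)).measurable
  have key : ∫⁻ x : E, ∫⁻ t in Set.Ioc (0:ℝ) 1, φ (x + t • z) ∂volume ∂volume = 0 := by
    have hunc : AEMeasurable (Function.uncurry fun (x : E) (t : ℝ) => φ (x + t • z))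
        (volume.prod (volume.restrict (Set.Ioc (0:ℝ) 1))) :=
      (hφm.comp haddm).aemeasurable
    rw [lintegral_lintegral_swap hunc]
    have hinner : ∀ t : ℝ, ∫⁻ x : E, φ (x + t • z) ∂volume = volume Sᶜ := by
      intro t
      rw [lintegral_add_right_eq_self φ (t • z)]
      simp [hφ, lintegral_indicator_one hSm.compl]
    simp only [hinner, hnull]
    simp
  have hinmeas : Measurable fun x : E => ∫⁻ t in Set.Ioc (0:ℝ) 1, φ (x + t • z) ∂volume :=
    Measurable.lintegral_prod_right (hφm.comp haddm)
  have hae0 : ∀ᵐ x : E, (∫⁻ t in Set.Ioc (0:ℝ) 1, φ (x + t • z) ∂volume) = 0 :=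
    (lintegral_eq_zero_iff hinmeas).1 key
  filter_upwards [hae0] with x hx0
  have : ∀ᵐ t ∂(volume.restrict (Set.Ioc (0:ℝ) 1)), φ (x + t • z) = 0 :=
    (lintegral_eq_zero_iff (hφm.comp (measurable_const.add
      (measurable_id.smul measurable_const)))).1 hx0
  filter_upwards [this] with t htz
  by_contra hcon
  have : φ (x + t • z) = 1 := by
    rw [hφ]
    rw [Set.indicator_of_mem]
    · rfl
    · exact hcon
  rw [htz] at this
  exact one_ne_zero this.symm

/-- Directional difference-quotient bound in `lintegral` form. -/
lemma directional_bound (hp : 1 < p) (hf : LipschitzWith L f) (z : E) :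
    ∫⁻ x : E, ENNReal.ofReal (|f (x + z) - f x| ^ p) ∂volume
      ≤ ∫⁻ x : E, ENNReal.ofReal (|fderiv ℝ f x z| ^ p) ∂volume := by
  have hmeasD : Measurable fun w : E => |fderiv ℝ f w z| ^ p :=
    (cont_abs_rpow (by linarith : (0:ℝ) < p)).measurable.comp
      (measurable_fderiv_apply_const ℝ f z)
  have step1 : ∫⁻ x : E, ENNReal.ofReal (|f (x + z) - f x| ^ p) ∂volume
      ≤ ∫⁻ x : E, ∫⁻ t in Set.Ioc (0:ℝ) 1,
          ENNReal.ofReal (|fderiv ℝ f (x + t • z) z| ^ p) ∂volume ∂volume := by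
    refine lintegral_mono_ae ?_
    filter_upwards [ae_ae_differentiable hf z] with x hx
    have hb := bbm_line_bound hp hf x z hx
    have hint : Integrable (fun t : ℝ => |fderiv ℝ f (x + t • z) z| ^ p)
        (volume.restrict (Set.Ioc (0:ℝ) 1)) := by
      refine ⟨(hmeasD.comp (measurable_const.add
        (measurable_id.smul measurable_const))).aestronglyMeasurable,
        HasFiniteIntegral.of_bounded (C := ((L : ℝ) * ‖z‖) ^ p) (ae_of_all _ fun t => ?_)⟩
      rw [Real.norm_eq_abs, abs_of_nonneg (Real.rpow_nonneg (abs_nonneg _) p)]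
      refine Real.rpow_le_rpow (abs_nonneg _) ?_ (by linarith)
      calc |fderiv ℝ f (x + t • z) z| ≤ ‖fderiv ℝ f (x + t • z)‖ * ‖z‖ := by
            simpa [Real.norm_eq_abs] using (fderiv ℝ f (x + t • z)).le_opNorm z
        _ ≤ (L : ℝ) * ‖z‖ :=
            mul_le_mul_of_nonneg_right (norm_fderiv_le_of_lipschitz ℝ hf) (norm_nonneg z)
    calc ENNReal.ofReal (|f (x + z) - f x| ^ p)
        ≤ ENNReal.ofReal (∫ t in Set.Ioc (0:ℝ) 1, |fderiv ℝ f (x + t • z) z| ^ p) :=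
          ENNReal.ofReal_le_ofReal hb
      _ = ∫⁻ t in Set.Ioc (0:ℝ) 1, ENNReal.ofReal (|fderiv ℝ f (x + t • z) z| ^ p) ∂volume :=
          ofReal_integral_eq_lintegral_ofReal hint
            (ae_of_all _ fun t => Real.rpow_nonneg (abs_nonneg _) p)
  refine step1.trans ?_
  have haddm : Measurable fun q : E × ℝ =>
      ENNReal.ofReal (|fderiv ℝ f (q.1 + q.2 • z) z| ^ p) := by
    refine ENNReal.measurable_ofReal.comp (hmeasD.comp ?_)
    exact (continuous_fst.add (continuous_snd.smul continuous_const)).measurable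
  have hunc : AEMeasurable (Function.uncurry fun (x : E) (t : ℝ) =>
      ENNReal.ofReal (|fderiv ℝ f (x + t • z) z| ^ p))
      (volume.prod (volume.restrict (Set.Ioc (0:ℝ) 1))) := haddm.aemeasurable
  rw [lintegral_lintegral_swap hunc]
  have hinner : ∀ t : ℝ, ∫⁻ x : E, ENNReal.ofReal (|fderiv ℝ f (x + t • z) z| ^ p) ∂volume
      = ∫⁻ x : E, ENNReal.ofReal (|fderiv ℝ f x z| ^ p) ∂volume := fun t =>
    lintegral_add_right_eq_self (fun w => ENNReal.ofReal (|fderiv ℝ f w z| ^ p)) (t • z)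
  simp only [hinner]
  rw [lintegral_const]
  simp

end Euclid

section Rotation

variable {N : ℕ}

local notation "E" => EuclideanSpace ℝ (Fin N)

/-- Rotation invariance: the integral of `|⟪w, u⟫|^p` over the unit ball equals
`‖u‖^p` times the integral for a fixed unit vector. -/
lemma rotation_integral {p : ℝ} (hp : 0 < p) (hN : 0 < N) (u : E) :
    ∫ w in ball (0:E) 1, |⟪w, u⟫| ^ p ∂volume
      = ‖u‖ ^ p * ∫ w in ball (0:E) 1,
          |⟪w, EuclideanSpace.single (⟨0, hN⟩ : Fin N) (1:ℝ)⟫| ^ p ∂volume := by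
  set e₁ : E := EuclideanSpace.single (⟨0, hN⟩ : Fin N) (1:ℝ) with he₁def
  have he₁ : ‖e₁‖ = 1 := by simp [he₁def, EuclideanSpace.norm_single]
  rcases eq_or_ne u 0 with rfl | hu
  · simp [Real.zero_rpow hp.ne']
  · set v : E := ‖u‖ • e₁ with hvdef
    have hv : ‖v‖ = ‖u‖ := by
      rw [hvdef, norm_smul, he₁, Real.norm_eq_abs, abs_of_nonneg (norm_nonneg u), mul_one]
    set O : E ≃ₗᵢ[ℝ] E := Submodule.reflection (ℝ ∙ (v - u))ᗮ with hOdef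
    have hOvu : O v = u := Submodule.reflection_sub hv
    have hmp : MeasurePreserving O volume volume := O.measurePreserving
    have hemb : MeasurableEmbedding O := O.toHomeomorph.measurableEmbedding
    have hpre : O ⁻¹' (ball (0:E) 1) = ball (0:E) 1 := by
      ext w
      simp only [Set.mem_preimage, mem_ball_zero_iff, O.norm_map]
    calc ∫ w in ball (0:E) 1, |⟪w, u⟫| ^ p ∂volume
        = ∫ w in O ⁻¹' (ball (0:E) 1), |⟪O w, u⟫| ^ p ∂volume :=
          (hmp.setIntegral_preimage_emb hemb _ _).symm
      _ = ∫ w in ball (0:E) 1, |⟪O w, u⟫| ^ p ∂volume := by rw [hpre]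
      _ = ∫ w in ball (0:E) 1, ‖u‖ ^ p * |⟪w, e₁⟫| ^ p ∂volume := by
          refine setIntegral_congr_fun measurableSet_ball fun w _ => ?_
          have h1 : ⟪O w, u⟫ = ⟪w, v⟫ := by rw [← hOvu, O.inner_map_map]
          rw [h1, hvdef, real_inner_smul_right, abs_mul,
            abs_of_nonneg (norm_nonneg u),
            Real.mul_rpow (norm_nonneg u) (abs_nonneg _)]
      _ = ‖u‖ ^ p * ∫ w in ball (0:E) 1, |⟪w, e₁⟫| ^ p ∂volume := by
          rw [integral_const_mul]

end Rotation

section Scaling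

variable {N : ℕ}

local notation "E" => EuclideanSpace ℝ (Fin N)

lemma functional_integral {p : ℝ} (hp : 0 < p) (hN : 0 < N) (ℓ : E →L[ℝ] ℝ) :
    ∫ w in ball (0:E) 1, |ℓ w| ^ p ∂volume
      = ‖ℓ‖ ^ p * ∫ w in ball (0:E) 1,
          |⟪w, EuclideanSpace.single (⟨0, hN⟩ : Fin N) (1:ℝ)⟫| ^ p ∂volume := by
  set u : E := (InnerProductSpace.toDual ℝ E).symm ℓ with hu
  have hnorm : ‖u‖ = ‖ℓ‖ := by
    rw [hu]; exact LinearIsometryEquiv.norm_map _ ℓ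
  have happ : ∀ w : E, ℓ w = ⟪w, u⟫ := fun w => by
    rw [real_inner_comm, hu, InnerProductSpace.toDual_symm_apply]
  have : ∀ w : E, |ℓ w| ^ p = |⟪w, u⟫| ^ p := fun w => by rw [happ]
  simp_rw [this]
  rw [rotation_integral hp hN u, hnorm]

lemma ball_scaling {r : ℝ} (hr : 0 < r) (g : E → ℝ) :
    ∫ z in ball (0:E) r, g z ∂volume = r ^ N * ∫ w in ball (0:E) 1, g (r • w) ∂volume := by
  have h := Measure.setIntegral_comp_smul_of_pos (μ := (volume : Measure E)) g (ball (0:E) 1) hr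
  rw [smul_unitBall_of_pos hr, finrank_euclideanSpace_fin] at h
  rw [h, smul_eq_mul]
  rw [← mul_assoc, mul_inv_cancel₀ (by positivity : (r:ℝ) ^ N ≠ 0), one_mul]

lemma ball_translate (x : E) (r : ℝ) (g : E → ℝ) :
    ∫ y in ball x r, g y ∂volume = ∫ z in ball (0:E) r, g (x + z) ∂volume := by
  have hmp : MeasurePreserving (fun z : E => x + z) volume volume :=
    measurePreserving_add_left volume x
  have hemb : MeasurableEmbedding (fun z : E => x + z) :=
    (Homeomorph.addLeft x).measurableEmbedding
  have hpre : (fun z : E => x + z) ⁻¹' ball x r = ball (0:E) r := by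
    ext z
    simp [mem_ball, dist_eq_norm]
  calc ∫ y in ball x r, g y ∂volume
      = ∫ z in (fun z : E => x + z) ⁻¹' ball x r, g (x + z) ∂volume :=
        (hmp.setIntegral_preimage_emb hemb _ _).symm
    _ = ∫ z in ball (0:E) r, g (x + z) ∂volume := by rw [hpre]

lemma vol_ball_toReal {r : ℝ} (hr : 0 < r) (x : E) :
    (volume (ball x r)).toReal = r ^ N * (volume (ball (0:E) 1)).toReal := by
  rw [Measure.addHaar_ball_of_pos _ x hr, finrank_euclideanSpace_fin]
  rw [ENNReal.toReal_mul, ENNReal.toReal_ofReal (by positivity)]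

end Scaling

section Pointwise

variable {N : ℕ} {p : ℝ} {L : NNReal} {f : EuclideanSpace ℝ (Fin N) → ℝ}

local notation "E" => EuclideanSpace ℝ (Fin N)

lemma cont_integrableOn_ball {g : E → ℝ} (hg : Continuous g) {c : E} {r : ℝ} :
    IntegrableOn g (ball c r) volume :=
  (hg.continuousOn.integrableOn_compact (isCompact_closedBall c r)).mono_set
    ball_subset_closedBall

lemma q_cont (hp0 : 0 < p) (hf : LipschitzWith L f) (r : ℝ) :
    Continuous fun q : EuclideanSpace ℝ (Fin N) × EuclideanSpace ℝ (Fin N) =>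
      |(f (q.1 + r • q.2) - f q.1) / r| ^ p := by
  refine (cont_abs_rpow hp0).comp ?_
  exact ((hf.continuous.comp (continuous_fst.add (continuous_snd.const_smul r))).sub
    (hf.continuous.comp continuous_fst)).div_const r

lemma inner_rewrite (hp0 : 0 < p) {r : ℝ} (hr : 0 < r) (x : E) :
    (1 / r ^ p) * ((volume (ball x r)).toReal⁻¹ * ∫ y in ball x r, |f x - f y| ^ p ∂volume)
      = (volume (ball (0:E) 1)).toReal⁻¹ *
        ∫ w in ball (0:E) 1, |(f (x + r • w) - f x) / r| ^ p ∂volume := by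
  have h1 : ∫ y in ball x r, |f x - f y| ^ p ∂volume
      = ∫ z in ball (0:E) r, |f x - f (x + z)| ^ p ∂volume :=
    ball_translate x r (fun y => |f x - f y| ^ p)
  have h2 : ∫ z in ball (0:E) r, |f x - f (x + z)| ^ p ∂volume
      = r ^ N * ∫ w in ball (0:E) 1, |f x - f (x + r • w)| ^ p ∂volume :=
    ball_scaling hr (fun z => |f x - f (x + z)| ^ p)
  have h3 : ∀ w : E, |(f (x + r • w) - f x) / r| ^ p = |f x - f (x + r • w)| ^ p / r ^ p := by
    intro w
    rw [abs_div, abs_of_pos hr, Real.div_rpow (abs_nonneg _) hr.le, abs_sub_comm]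
  have h4 : ∫ w in ball (0:E) 1, |(f (x + r • w) - f x) / r| ^ p ∂volume
      = (∫ w in ball (0:E) 1, |f x - f (x + r • w)| ^ p ∂volume) / r ^ p := by
    simp_rw [h3]
    exact integral_div _ _
  rw [h1, h2, h4, vol_ball_toReal hr x]
  have hrN : (r:ℝ) ^ N ≠ 0 := by positivity
  have hrp : (r:ℝ) ^ p ≠ 0 := by positivity
  rw [mul_inv]
  have halg : ∀ (a v I q : ℝ), a ≠ 0 → q ≠ 0 →
      (1/q) * (a⁻¹ * v * (a * I)) = v * (I / q) := by
    intro a v I q ha hq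
    field_simp
  exact halg _ _ _ _ hrN hrp

lemma pointwise_limit (hp : 1 < p) (hf : LipschitzWith L f) (x : E)
    (hx : DifferentiableAt ℝ f x) (u : ℕ → ℝ) (hu0 : ∀ n, 0 < u n)
    (hu : Tendsto u atTop (nhds 0)) :
    Tendsto (fun n => ∫ w in ball (0:E) 1, |(f (x + u n • w) - f x) / u n| ^ p ∂volume)
      atTop (nhds (∫ w in ball (0:E) 1, |fderiv ℝ f x w| ^ p ∂volume)) := by
  have hp0 : (0:ℝ) < p := by linarith
  have hfin : IsFiniteMeasure (volume.restrict (ball (0:E) 1)) :=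
    ⟨by rw [Measure.restrict_apply_univ]; exact measure_ball_lt_top⟩
  refine tendsto_integral_of_dominated_convergence (fun _ => (L:ℝ) ^ p)
    (fun n => ?_) (integrable_const _) (fun n => ?_) ?_
  · exact ((q_cont hp0 hf (u n)).comp (Continuous.prodMk_right x)).aestronglyMeasurable
  · refine (ae_restrict_iff' measurableSet_ball).2 (ae_of_all _ fun w hw => ?_)
    rw [Real.norm_eq_abs, abs_of_nonneg (Real.rpow_nonneg (abs_nonneg _) p)]
    refine Real.rpow_le_rpow (abs_nonneg _) ?_ hp0.le
    have hd : |f (x + u n • w) - f x| ≤ (L:ℝ) * (u n * ‖w‖) := by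
      have := hf.dist_le_mul (x + u n • w) x
      rw [Real.dist_eq] at this
      refine this.trans ?_
      have : dist (x + u n • w) x = u n * ‖w‖ := by
        rw [dist_eq_norm, add_sub_cancel_left, norm_smul, Real.norm_eq_abs,
          abs_of_pos (hu0 n)]
      rw [this]
    rw [abs_div, abs_of_pos (hu0 n), div_le_iff₀ (hu0 n)]
    calc |f (x + u n • w) - f x| ≤ (L:ℝ) * (u n * ‖w‖) := hd
      _ ≤ (L:ℝ) * (u n * 1) := by
          refine mul_le_mul_of_nonneg_left ?_ L.coe_nonneg
          exact mul_le_mul_of_nonneg_left (le_of_lt (mem_ball_zero_iff.1 hw)) (hu0 n).le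
      _ = (L:ℝ) * u n := by ring
  · refine ae_of_all _ fun w => ?_
    have hc : HasDerivAt (fun t : ℝ => x + t • w) w 0 := by
      have h1 : HasDerivAt (fun t : ℝ => t • w) ((1:ℝ) • w) 0 := (hasDerivAt_id 0).smul_const w
      simpa using h1.const_add x
    have hg : HasDerivAt (fun t : ℝ => f (x + t • w)) (fderiv ℝ f x w) 0 := by
      have hx' : DifferentiableAt ℝ f ((fun t : ℝ => x + t • w) 0) := by simpa using hx
      have := hx'.hasFDerivAt.comp_hasDerivAt 0 hc
      simpa only [zero_smul, add_zero, Function.comp_def] using this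
    have hslope := hasDerivAt_iff_tendsto_slope.1 hg
    have htu : Tendsto u atTop (nhdsWithin 0 {(0:ℝ)}ᶜ) := by
      rw [tendsto_nhdsWithin_iff]
      exact ⟨hu, Eventually.of_forall fun n => (hu0 n).ne'⟩
    have hcomp := hslope.comp htu
    have hq : Tendsto (fun n => (f (x + u n • w) - f x) / u n) atTop
        (nhds (fderiv ℝ f x w)) := by
      refine hcomp.congr fun n => ?_
      simp [slope_def_field, div_eq_inv_mul]
    exact ((cont_abs_rpow hp0).continuousAt.tendsto.comp hq)

end Pointwise

section Upper

variable {N : ℕ} {p : ℝ} {L : NNReal} {f : EuclideanSpace ℝ (Fin N) → ℝ}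

local notation "E" => EuclideanSpace ℝ (Fin N)

lemma measurable_Dfw (hp0 : 0 < p) (f : E → ℝ) :
    Measurable fun q : EuclideanSpace ℝ (Fin N) × EuclideanSpace ℝ (Fin N) =>
      |fderiv ℝ f q.1 q.2| ^ p := by
  have h1 : Measurable fun q : E × E => fderiv ℝ f q.1 q.2 := by
    have hev : Continuous fun s : (EuclideanSpace ℝ (Fin N) →L[ℝ] ℝ) × EuclideanSpace ℝ (Fin N)
        => s.1 s.2 := isBoundedBilinearMap_apply.continuous
    exact hev.measurable.comp (((measurable_fderiv ℝ f).comp measurable_fst).prodMk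
      measurable_snd)
  exact (cont_abs_rpow hp0).measurable.comp h1

lemma upper_bound (hN : 0 < N) (hp : 1 < p) (hf : LipschitzWith L f) {r : ℝ} (hr : 0 < r) :
    ∫⁻ x : E, ENNReal.ofReal ((volume (ball (0:E) 1)).toReal⁻¹ *
        ∫ w in ball (0:E) 1, |(f (x + r • w) - f x) / r| ^ p ∂volume) ∂volume
      ≤ ENNReal.ofReal ((volume (ball (0:E) 1)).toReal⁻¹ *
          ∫ w in ball (0:E) 1,
            |⟪w, EuclideanSpace.single (⟨0, hN⟩ : Fin N) (1:ℝ)⟫| ^ p ∂volume) *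
        ∫⁻ x : E, ENNReal.ofReal (‖fderiv ℝ f x‖ ^ p) ∂volume := by
  have hp0 : (0:ℝ) < p := by linarith
  set v1 : ℝ := (volume (ball (0:E) 1)).toReal with hv1
  set K : ℝ := ∫ w in ball (0:E) 1,
    |⟪w, EuclideanSpace.single (⟨0, hN⟩ : Fin N) (1:ℝ)⟫| ^ p ∂volume with hK
  have hKnn : 0 ≤ K := setIntegral_nonneg measurableSet_ball
    fun w _ => Real.rpow_nonneg (abs_nonneg _) p
  have hqc := q_cont hp0 hf r
  have hrp : (0:ℝ) < r ^ p := Real.rpow_pos_of_pos hr p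
  -- split constants
  have hsplit : ∀ x : E, ENNReal.ofReal (v1⁻¹ *
      ∫ w in ball (0:E) 1, |(f (x + r • w) - f x) / r| ^ p ∂volume)
      = ENNReal.ofReal v1⁻¹ * ENNReal.ofReal
          (∫ w in ball (0:E) 1, |(f (x + r • w) - f x) / r| ^ p ∂volume) := fun x =>
    ENNReal.ofReal_mul (inv_nonneg.2 ENNReal.toReal_nonneg)
  simp_rw [hsplit]
  rw [lintegral_const_mul' _ _ ENNReal.ofReal_ne_top]
  have hinner : ∀ x : E, ENNReal.ofReal
      (∫ w in ball (0:E) 1, |(f (x + r • w) - f x) / r| ^ p ∂volume)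
      = ∫⁻ w in ball (0:E) 1,
          ENNReal.ofReal (|(f (x + r • w) - f x) / r| ^ p) ∂volume := by
    intro x
    refine ofReal_integral_eq_lintegral_ofReal ?_
      (ae_of_all _ fun w => Real.rpow_nonneg (abs_nonneg _) p)
    exact cont_integrableOn_ball (hqc.comp (Continuous.prodMk_right x))
  simp_rw [hinner]
  have hunc : AEMeasurable (Function.uncurry fun (x : E) (w : E) =>
      ENNReal.ofReal (|(f (x + r • w) - f x) / r| ^ p))
      (volume.prod (volume.restrict (ball (0:E) 1))) :=
    (ENNReal.measurable_ofReal.comp hqc.measurable).aemeasurable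
  rw [lintegral_lintegral_swap hunc]
  -- directional bound for each w
  have hstep : ∀ w : E, (∫⁻ x : E, ENNReal.ofReal (|(f (x + r • w) - f x) / r| ^ p) ∂volume)
      ≤ ∫⁻ x : E, ENNReal.ofReal (|fderiv ℝ f x w| ^ p) ∂volume := by
    intro w
    have e1 : ∀ x : E, |(f (x + r • w) - f x) / r| ^ p
        = |f (x + r • w) - f x| ^ p * (r ^ p)⁻¹ := by
      intro x
      rw [abs_div, abs_of_pos hr, Real.div_rpow (abs_nonneg _) hr.le, div_eq_mul_inv]
    simp_rw [e1]
    have e2 : ∀ x : E, ENNReal.ofReal (|f (x + r • w) - f x| ^ p * (r ^ p)⁻¹)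
        = ENNReal.ofReal (|f (x + r • w) - f x| ^ p) * ENNReal.ofReal ((r ^ p)⁻¹) := fun x =>
      ENNReal.ofReal_mul (Real.rpow_nonneg (abs_nonneg _) p)
    simp_rw [e2]
    rw [lintegral_mul_const' _ _ ENNReal.ofReal_ne_top]
    have hdb := directional_bound hp hf (r • w)
    have e3 : ∀ x : E, |fderiv ℝ f x (r • w)| ^ p = r ^ p * |fderiv ℝ f x w| ^ p := by
      intro x
      rw [(fderiv ℝ f x).map_smul, smul_eq_mul, abs_mul, abs_of_pos hr,
        Real.mul_rpow hr.le (abs_nonneg _)]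
    simp_rw [e3] at hdb
    have e4 : ∀ x : E, ENNReal.ofReal (r ^ p * |fderiv ℝ f x w| ^ p)
        = ENNReal.ofReal (r ^ p) * ENNReal.ofReal (|fderiv ℝ f x w| ^ p) := fun x =>
      ENNReal.ofReal_mul hrp.le
    simp_rw [e4] at hdb
    rw [lintegral_const_mul' _ _ ENNReal.ofReal_ne_top] at hdb
    calc (∫⁻ x : E, ENNReal.ofReal (|f (x + r • w) - f x| ^ p) ∂volume)
          * ENNReal.ofReal ((r ^ p)⁻¹)
        ≤ (ENNReal.ofReal (r ^ p) * ∫⁻ x : E, ENNReal.ofReal (|fderiv ℝ f x w| ^ p) ∂volume)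
          * ENNReal.ofReal ((r ^ p)⁻¹) := mul_le_mul_left hdb _
      _ = (ENNReal.ofReal (r ^ p) * ENNReal.ofReal ((r ^ p)⁻¹))
          * ∫⁻ x : E, ENNReal.ofReal (|fderiv ℝ f x w| ^ p) ∂volume := by ring
      _ = ∫⁻ x : E, ENNReal.ofReal (|fderiv ℝ f x w| ^ p) ∂volume := by
          rw [← ENNReal.ofReal_mul hrp.le, mul_inv_cancel₀ hrp.ne', ENNReal.ofReal_one,
            one_mul]
  have hmono := lintegral_mono_ae (μ := volume.restrict (ball (0:E) 1))
    (ae_of_all _ hstep)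
  refine le_trans (mul_le_mul_right hmono _) ?_
  -- swap back and compute
  have hunc2 : AEMeasurable (Function.uncurry fun (x : E) (w : E) =>
      ENNReal.ofReal (|fderiv ℝ f x w| ^ p))
      (volume.prod (volume.restrict (ball (0:E) 1))) :=
    (ENNReal.measurable_ofReal.comp (measurable_Dfw hp0 f)).aemeasurable
  rw [← lintegral_lintegral_swap hunc2]
  have hback : ∀ x : E, (∫⁻ w in ball (0:E) 1, ENNReal.ofReal (|fderiv ℝ f x w| ^ p) ∂volume)
      = ENNReal.ofReal (‖fderiv ℝ f x‖ ^ p) * ENNReal.ofReal K := by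
    intro x
    have hcont : Continuous fun w : E => |fderiv ℝ f x w| ^ p :=
      (cont_abs_rpow hp0).comp (fderiv ℝ f x).continuous
    rw [← ofReal_integral_eq_lintegral_ofReal (cont_integrableOn_ball hcont)
      (ae_of_all _ fun w => Real.rpow_nonneg (abs_nonneg _) p)]
    rw [functional_integral hp0 hN (fderiv ℝ f x), ← hK,
      ENNReal.ofReal_mul (Real.rpow_nonneg (norm_nonneg _) p)]
  simp_rw [hback]
  rw [lintegral_mul_const' _ _ ENNReal.ofReal_ne_top]
  rw [ENNReal.ofReal_mul (inv_nonneg.2 ENNReal.toReal_nonneg)]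
  ring_nf
  exact le_of_eq (by rw [hv1]; ring)

end Upper

/-- Integrated BBM formula for a Lipschitz function in `W^{1,p}(ℝ^N)`: the BBM
difference quotients with averaged-ball kernel converge to `C_{p,N} ∫ |∇f|^p`. -/
theorem bbm_formula_lipschitz_sobolev_euclidean (N : ℕ) (hN : 0 < N) (p : ℝ) (hp : 1 < p)
    (f : EuclideanSpace ℝ (Fin N) → ℝ) (L : NNReal) (hf : LipschitzWith L f)
    (hfLp : MemLp f (ENNReal.ofReal p) volume)
    (hgradLp : MemLp (fun x => ‖fderiv ℝ f x‖) (ENNReal.ofReal p) volume) :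
    Tendsto
      (fun r => (1 / r ^ p) *
        ∫ x, ((volume (ball x r)).toReal⁻¹ *
          ∫ y in ball x r, |f x - f y| ^ p ∂volume) ∂volume)
      (nhdsWithin 0 (Set.Ioi 0))
      (nhds (((volume (ball (0 : EuclideanSpace ℝ (Fin N)) 1)).toReal⁻¹ *
          ∫ z in ball (0 : EuclideanSpace ℝ (Fin N)) 1,
            |⟪z, EuclideanSpace.single (⟨0, hN⟩ : Fin N) (1 : ℝ)⟫| ^ p ∂volume) *
        ∫ x, ‖fderiv ℝ f x‖ ^ p ∂volume)) := by
  classical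
  have hp0 : (0:ℝ) < p := by linarith
  set v1 : ℝ := (volume (ball (0 : EuclideanSpace ℝ (Fin N)) 1)).toReal with hv1
  set K : ℝ := ∫ z in ball (0 : EuclideanSpace ℝ (Fin N)) 1,
    |⟪z, EuclideanSpace.single (⟨0, hN⟩ : Fin N) (1 : ℝ)⟫| ^ p ∂volume with hKdef
  have hKnn : 0 ≤ K := setIntegral_nonneg measurableSet_ball
    fun w _ => Real.rpow_nonneg (abs_nonneg _) p
  have hCnn : 0 ≤ v1⁻¹ * K := mul_nonneg (inv_nonneg.2 ENNReal.toReal_nonneg) hKnn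
  -- the gradient term
  have hDnormmeas : Measurable fun x : EuclideanSpace ℝ (Fin N) => ‖fderiv ℝ f x‖ ^ p := by
    have := (cont_abs_rpow hp0).measurable.comp (measurable_fderiv ℝ f).norm
    simpa [Function.comp_def, abs_of_nonneg (norm_nonneg _)] using this
  set G : ℝ≥0∞ := ∫⁻ x : EuclideanSpace ℝ (Fin N),
    ENNReal.ofReal (‖fderiv ℝ f x‖ ^ p) ∂volume with hGdef
  have hInt : Integrable (fun x : EuclideanSpace ℝ (Fin N) => ‖fderiv ℝ f x‖ ^ p) volume := by
    have h0 : (ENNReal.ofReal p) ≠ 0 := by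
      simp only [ne_eq, ENNReal.ofReal_eq_zero, not_le]; linarith
    have := hgradLp.integrable_norm_rpow h0 ENNReal.ofReal_ne_top
    simpa [ENNReal.toReal_ofReal hp0.le, Real.norm_eq_abs,
      abs_of_nonneg (norm_nonneg _)] using this
  have hGeq : ∫ x : EuclideanSpace ℝ (Fin N), ‖fderiv ℝ f x‖ ^ p ∂volume = G.toReal := by
    rw [hGdef, integral_eq_lintegral_of_nonneg_ae
      (ae_of_all _ fun x => Real.rpow_nonneg (norm_nonneg _) p)
      hDnormmeas.aestronglyMeasurable]
  have hGfin : G ≠ ⊤ := by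
    have hnn : ∀ x : EuclideanSpace ℝ (Fin N),
        ENNReal.ofReal (‖fderiv ℝ f x‖ ^ p) = (‖‖fderiv ℝ f x‖ ^ p‖₊ : ℝ≥0∞) := fun x => by
      rw [← ENNReal.ofReal_coe_nnreal, coe_nnnorm, Real.norm_eq_abs,
        abs_of_nonneg (Real.rpow_nonneg (norm_nonneg _) p)]
    rw [hGdef]
    simp_rw [hnn]
    exact hInt.2.ne
  set Λ : ℝ≥0∞ := ENNReal.ofReal (v1⁻¹ * K) * G with hΛdef
  have hΛfin : Λ ≠ ⊤ := ENNReal.mul_ne_top ENNReal.ofReal_ne_top hGfin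
  have hA : (v1⁻¹ * K) * ∫ x : EuclideanSpace ℝ (Fin N), ‖fderiv ℝ f x‖ ^ p ∂volume
      = Λ.toReal := by
    rw [hGeq, hΛdef, ENNReal.toReal_mul, ENNReal.toReal_ofReal hCnn]
  rw [show ((volume (ball (0 : EuclideanSpace ℝ (Fin N)) 1)).toReal⁻¹ *
      ∫ z in ball (0 : EuclideanSpace ℝ (Fin N)) 1,
        |⟪z, EuclideanSpace.single (⟨0, hN⟩ : Fin N) (1 : ℝ)⟫| ^ p ∂volume) *
      ∫ x, ‖fderiv ℝ f x‖ ^ p ∂volume = Λ.toReal from hA]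
  rw [Filter.tendsto_iff_seq_tendsto]
  intro u hu
  obtain ⟨h𝓝, hmem⟩ := tendsto_nhdsWithin_iff.1 hu
  set u' : ℕ → ℝ := fun n => if 0 < u n then u n else 1 with hu'def
  have hu'0 : ∀ n, 0 < u' n := by
    intro n
    by_cases h : 0 < u n <;> simp [hu'def, h]
  have heq : u' =ᶠ[atTop] u := hmem.mono fun n hn => by
    simp [hu'def, Set.mem_Ioi.1 hn]
  have hu' : Tendsto u' atTop (nhds 0) := h𝓝.congr' heq.symm
  -- measurability of the inner integral
  have hsm : ∀ r : ℝ, Measurable fun x : EuclideanSpace ℝ (Fin N) =>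
      ∫ w in ball (0 : EuclideanSpace ℝ (Fin N)) 1,
        |(f (x + r • w) - f x) / r| ^ p ∂volume := by
    intro r
    exact ((q_cont hp0 hf r).stronglyMeasurable.integral_prod_right').measurable
  have hmeasn : ∀ r : ℝ, Measurable fun x : EuclideanSpace ℝ (Fin N) =>
      ENNReal.ofReal (v1⁻¹ * ∫ w in ball (0 : EuclideanSpace ℝ (Fin N)) 1,
        |(f (x + r • w) - f x) / r| ^ p ∂volume) := fun r =>
    ENNReal.measurable_ofReal.comp (measurable_const.mul (hsm r))
  set Φ : ℝ → ℝ≥0∞ := fun r => ∫⁻ x : EuclideanSpace ℝ (Fin N),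
    ENNReal.ofReal (v1⁻¹ * ∫ w in ball (0 : EuclideanSpace ℝ (Fin N)) 1,
      |(f (x + r • w) - f x) / r| ^ p ∂volume) ∂volume with hΦdef
  -- upper bound
  have hub : ∀ n, Φ (u' n) ≤ Λ := fun n => upper_bound hN hp hf (hu'0 n)
  -- lower bound via Fatou
  have hae : ∀ᵐ x : EuclideanSpace ℝ (Fin N) ∂volume,
      Tendsto (fun n => ENNReal.ofReal (v1⁻¹ *
        ∫ w in ball (0 : EuclideanSpace ℝ (Fin N)) 1,
          |(f (x + u' n • w) - f x) / u' n| ^ p ∂volume)) atTop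
        (nhds (ENNReal.ofReal (v1⁻¹ * (‖fderiv ℝ f x‖ ^ p * K)))) := by
    filter_upwards [hf.ae_differentiableAt (μ := volume)] with x hx
    have h1 := pointwise_limit hp hf x hx u' hu'0 hu'
    rw [functional_integral hp0 hN (fderiv ℝ f x)] at h1
    exact ENNReal.tendsto_ofReal (tendsto_const_nhds.mul h1)
  have hΛeq : Λ = ∫⁻ x : EuclideanSpace ℝ (Fin N),
      ENNReal.ofReal (v1⁻¹ * (‖fderiv ℝ f x‖ ^ p * K)) ∂volume := by
    have e1 : ∀ x : EuclideanSpace ℝ (Fin N),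
        ENNReal.ofReal (v1⁻¹ * (‖fderiv ℝ f x‖ ^ p * K))
          = ENNReal.ofReal v1⁻¹ *
            (ENNReal.ofReal (‖fderiv ℝ f x‖ ^ p) * ENNReal.ofReal K) := fun x => by
      rw [ENNReal.ofReal_mul (inv_nonneg.2 ENNReal.toReal_nonneg),
        ENNReal.ofReal_mul (Real.rpow_nonneg (norm_nonneg _) p)]
    simp_rw [e1]
    rw [lintegral_const_mul' _ _ ENNReal.ofReal_ne_top,
      lintegral_mul_const' _ _ ENNReal.ofReal_ne_top]
    rw [hΛdef, ENNReal.ofReal_mul (inv_nonneg.2 ENNReal.toReal_nonneg)]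
    ring
  have hliminf : Λ ≤ liminf (fun n => Φ (u' n)) atTop := by
    rw [hΛeq]
    have e2 : ∫⁻ x : EuclideanSpace ℝ (Fin N),
        ENNReal.ofReal (v1⁻¹ * (‖fderiv ℝ f x‖ ^ p * K)) ∂volume
        = ∫⁻ x : EuclideanSpace ℝ (Fin N), liminf (fun n =>
            ENNReal.ofReal (v1⁻¹ * ∫ w in ball (0 : EuclideanSpace ℝ (Fin N)) 1,
              |(f (x + u' n • w) - f x) / u' n| ^ p ∂volume)) atTop ∂volume := by
      refine lintegral_congr_ae ?_
      filter_upwards [hae] with x hx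
      exact hx.liminf_eq.symm
    rw [e2]
    exact lintegral_liminf_le fun n => hmeasn (u' n)
  have hΦtend : Tendsto (fun n => Φ (u' n)) atTop (nhds Λ) := by
    refine tendsto_of_le_liminf_of_limsup_le hliminf ?_
    exact limsup_le_of_le (by isBoundedDefault) (Eventually.of_forall hub)
  -- identification with the real expression
  have hFeq : ∀ n, (1 / u' n ^ p) *
      ∫ x, ((volume (ball x (u' n))).toReal⁻¹ *
        ∫ y in ball x (u' n), |f x - f y| ^ p ∂volume) ∂volume = (Φ (u' n)).toReal := by
    intro n
    rw [← integral_const_mul]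
    have : ∀ x : EuclideanSpace ℝ (Fin N),
        (1 / u' n ^ p) * ((volume (ball x (u' n))).toReal⁻¹ *
          ∫ y in ball x (u' n), |f x - f y| ^ p ∂volume)
        = v1⁻¹ * ∫ w in ball (0 : EuclideanSpace ℝ (Fin N)) 1,
            |(f (x + u' n • w) - f x) / u' n| ^ p ∂volume := fun x =>
      inner_rewrite hp0 (hu'0 n) x
    simp_rw [this]
    rw [hΦdef, integral_eq_lintegral_of_nonneg_ae]
    · exact ae_of_all _ fun x => mul_nonneg (inv_nonneg.2 ENNReal.toReal_nonneg)
        (setIntegral_nonneg measurableSet_ball fun w _ =>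
          Real.rpow_nonneg (abs_nonneg _) p)
    · exact (measurable_const.mul (hsm (u' n))).aestronglyMeasurable
  have htoReal : Tendsto (fun n => (Φ (u' n)).toReal) atTop (nhds Λ.toReal) :=
    (ENNReal.tendsto_toReal hΛfin).comp hΦtend
  have hmain : Tendsto (fun n => (1 / u' n ^ p) *
      ∫ x, ((volume (ball x (u' n))).toReal⁻¹ *
        ∫ y in ball x (u' n), |f x - f y| ^ p ∂volume) ∂volume) atTop (nhds Λ.toReal) := by
    refine htoReal.congr fun n => (hFeq n).symm
  refine hmain.congr' ?_
  filter_upwards [heq] with n hn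
  simp only [Function.comp_apply]
  rw [hn]
end

section
/- Let H : (−1,1) → ℝ be defined by H(s) = (2π/(1 − cos(2πs))) · (s − sin(2πs)/(2π)) for s ≠ 0 and H(0) = 0. Then H is a strictly monotone continuous bijection from (−1,1) onto ℝ with H(0) = 0. -/
open Real Set

set_option maxHeartbeats 1000000 in
/-- The Hajłasz–Zimmerman function `H(s) = (2π/(1-cos 2πs))(s - sin(2πs)/(2π))` is a
strictly monotone continuous bijection from `(-1,1)` onto `ℝ` with `H(0) = 0`. -/
theorem hajlasz_zimmerman_H_bijective :
    ∀ H : ℝ → ℝ,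
      (∀ s, s ≠ 0 →
        H s = (2 * π / (1 - Real.cos (2 * π * s))) * (s - Real.sin (2 * π * s) / (2 * π))) →
      H 0 = 0 →
      StrictMonoOn H (Ioo (-1 : ℝ) 1) ∧ ContinuousOn H (Ioo (-1 : ℝ) 1) ∧
        BijOn H (Ioo (-1 : ℝ) 1) univ := by
  intro H hH hH0
  have hπ : (0:ℝ) < π := pi_pos
  have hπ4 : (3:ℝ) < π := by
    nlinarith [pi_gt_d6]
  -- denominator positivity
  have hden : ∀ s : ℝ, -1 < s → s < 1 → s ≠ 0 → 0 < 1 - Real.cos (2 * π * s) := by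
    intro s h1 h2 h0
    have hne : Real.cos (2 * π * s) ≠ 1 := by
      intro h
      have := (Real.cos_eq_one_iff_of_lt_of_lt (x := 2 * π * s) (by nlinarith) (by nlinarith)).1 h
      exact h0 (by nlinarith [this])
    have := Real.cos_le_one (2 * π * s)
    cases this.lt_or_eq with
    | inl h => linarith
    | inr h => exact absurd h hne
  set F : ℝ → ℝ := fun s => (2 * π * s - Real.sin (2 * π * s)) / (1 - Real.cos (2 * π * s)) with hF
  have hHF : ∀ s : ℝ, -1 < s → s < 1 → s ≠ 0 → H s = F s := by
    intro s h1 h2 h0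
    rw [hH s h0, hF]
    have hd := (hden s h1 h2 h0).ne'
    field_simp
  -- oddness
  have hodd : ∀ s : ℝ, H (-s) = - H s := by
    intro s
    by_cases h0 : s = 0
    · simp [h0, hH0]
    · rw [hH s h0, hH (-s) (neg_ne_zero.2 h0)]
      have : 2 * π * -s = -(2 * π * s) := by ring
      rw [this, Real.cos_neg, Real.sin_neg]
      ring
  -- key inequality
  have hkey : ∀ θ : ℝ, 0 < θ → θ < 2 * π → 0 < 2 - 2 * Real.cos θ - θ * Real.sin θ := by
    intro θ hθ0 hθ2
    set u := θ / 2 with hu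
    have hu0 : 0 < u := by positivity
    have huπ : u < π := by simp only [hu]; linarith
    have hsinu : 0 < Real.sin u := Real.sin_pos_of_pos_of_lt_pi hu0 huπ
    have hg : u * Real.cos u < Real.sin u := by
      rcases le_or_gt (Real.cos u) 0 with hc | hc
      · nlinarith
      · have hu2 : u < π / 2 := by
          by_contra h
          push_neg at h
          exact absurd (Real.cos_nonpos_of_pi_div_two_le_of_le h (by linarith)) (not_le.2 hc)
        have := Real.lt_tan hu0 hu2
        rw [Real.tan_eq_sin_div_cos] at this
        calc u * Real.cos u < (Real.sin u / Real.cos u) * Real.cos u := by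
              exact mul_lt_mul_of_pos_right this hc
          _ = Real.sin u := by field_simp
    have hθu : θ = 2 * u := by rw [hu]; ring
    have hcos : Real.cos θ = 1 - 2 * Real.sin u ^ 2 := by
      rw [hθu, Real.cos_two_mul]
      nlinarith [Real.sin_sq_add_cos_sq u]
    have hsin : Real.sin θ = 2 * Real.sin u * Real.cos u := by
      rw [hθu, Real.sin_two_mul]
    rw [hcos, hsin, hθu]
    nlinarith [mul_pos hsinu (sub_pos.2 hg)]
  -- derivative
  have hderiv : ∀ x : ℝ, 0 < x → x < 1 → ∃ d : ℝ, 0 < d ∧ HasDerivAt H d x := by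
    intro x h0 h1
    have hd := hden x (by linarith) h1 (ne_of_gt h0)
    have hdne := hd.ne'
    have hlin : HasDerivAt (fun s : ℝ => 2 * π * s) (2 * π) x := by
      simpa using (hasDerivAt_id x).const_mul (2 * π)
    have hsin : HasDerivAt (fun s : ℝ => Real.sin (2 * π * s)) (Real.cos (2 * π * x) * (2 * π)) x :=
      (Real.hasDerivAt_sin (2 * π * x)).comp x hlin
    have hcos : HasDerivAt (fun s : ℝ => Real.cos (2 * π * s)) (-Real.sin (2 * π * x) * (2 * π)) x :=
      (Real.hasDerivAt_cos (2 * π * x)).comp x hlin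
    have hnum : HasDerivAt (fun s : ℝ => 2 * π * s - Real.sin (2 * π * s))
        (2 * π - Real.cos (2 * π * x) * (2 * π)) x := hlin.sub hsin
    have hdenom : HasDerivAt (fun s : ℝ => 1 - Real.cos (2 * π * s))
        (Real.sin (2 * π * x) * (2 * π)) x := by
      simpa using hcos.const_sub (1:ℝ)
    have hFd := hnum.div hdenom hdne
    have hHd : HasDerivAt H (((2 * π - Real.cos (2 * π * x) * (2 * π)) *
        (1 - Real.cos (2 * π * x)) - (2 * π * x - Real.sin (2 * π * x)) *
        (Real.sin (2 * π * x) * (2 * π))) / (1 - Real.cos (2 * π * x)) ^ 2) x := by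
      apply hFd.congr_of_eventuallyEq
      filter_upwards [Ioo_mem_nhds h0 h1] with s hs
      exact hHF s (by linarith [hs.1]) hs.2 (ne_of_gt hs.1)
    refine ⟨_, ?_, hHd⟩
    apply div_pos _ (by positivity)
    have hk := hkey (2 * π * x) (by positivity) (by nlinarith)
    have hid := Real.sin_sq_add_cos_sq (2 * π * x)
    have heq : (2 * π - Real.cos (2 * π * x) * (2 * π)) * (1 - Real.cos (2 * π * x)) -
        (2 * π * x - Real.sin (2 * π * x)) * (Real.sin (2 * π * x) * (2 * π)) =
        2 * π * (2 - 2 * Real.cos (2 * π * x) - 2 * π * x * Real.sin (2 * π * x)) := by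
      linear_combination (2 * π) * hid
    rw [heq]
    positivity
  -- continuity at 0
  have hbound : ∀ s : ℝ, 0 < s → s ≤ 1/8 → 0 < H s ∧ H s ≤ 8 * s := by
    intro s h0 h8
    set θ := 2 * π * s with hθ
    have hθ0 : 0 < θ := by positivity
    have hπ32 : π < 3.2 := by nlinarith [pi_lt_d2]
    have hθ1 : θ ≤ 1 := by
      have := mul_le_mul_of_nonneg_left h8 (by linarith : (0:ℝ) ≤ 2 * π)
      simp only [hθ]
      nlinarith
    have hd := hden s (by linarith) (by linarith) (ne_of_gt h0)
    rw [hHF s (by linarith) (by linarith) (ne_of_gt h0)]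
    have hnum1 : Real.sin θ < θ := Real.sin_lt hθ0
    have hnum2 : θ - θ ^ 3 / 4 < Real.sin θ := by have := Real.sin_gt_sub_cube hθ0; nlinarith [pow_pos hθ0 3]
    -- lower bound on denominator
    have hhalf : Real.sin (θ/2) > θ/2 - (θ/2)^3/4 := by have := Real.sin_gt_sub_cube (half_pos hθ0); nlinarith [pow_pos (half_pos hθ0) 3]
    have hcosθ : Real.cos θ = 1 - 2 * Real.sin (θ/2) ^ 2 := by
      have h := Real.cos_two_mul (θ/2)
      rw [show (2:ℝ) * (θ/2) = θ by ring] at h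
      nlinarith [Real.sin_sq_add_cos_sq (θ/2)]
    have hdl : 1 - Real.cos θ ≥ (2:ℝ)/5 * θ^2 := by
      rw [hcosθ]
      have hsq : θ^2 ≤ 1 := by nlinarith [mul_le_mul hθ1 hθ1 hθ0.le (by norm_num : (0:ℝ) ≤ 1)]
      have hcube : θ^3 ≤ θ := by nlinarith [mul_nonneg hθ0.le (sub_nonneg.2 hsq)]
      have h1 : θ/2 - (θ/2)^3/4 ≥ (15/16) * (θ/2) := by nlinarith
      have h2 : Real.sin (θ/2) ≥ (15/16) * (θ/2) := by linarith
      have h3 : ((15/16) * (θ/2))^2 ≤ Real.sin (θ/2)^2 :=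
        pow_le_pow_left₀ (by positivity) h2 2
      nlinarith [h3]
    constructor
    · apply div_pos _ hd
      linarith
    · rw [div_le_iff₀ hd]
      have : θ - Real.sin θ ≤ θ^3/4 := by linarith
      nlinarith
  have htend0 : Filter.Tendsto H (nhds 0) (nhds 0) := by
    have hev : ∀ᶠ s : ℝ in nhds 0, -(8 * |s|) ≤ H s ∧ H s ≤ 8 * |s| := by
      filter_upwards [Ioo_mem_nhds (by norm_num : (-(1:ℝ)/8) < 0) (by norm_num : (0:ℝ) < 1/8)] with s hs
      rcases lt_trichotomy s 0 with h | h | h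
      · have := hbound (-s) (by linarith) (by linarith [hs.1])
        have habs : |s| = -s := abs_of_neg h
        have hHs : H s = - H (-s) := by rw [← hodd (-s)]; simp
        constructor <;> [skip; skip] <;> rw [hHs, habs] <;> linarith [this.1, this.2]
      · simp [h, hH0]
      · have := hbound s h (by linarith [hs.2])
        have habs : |s| = s := abs_of_pos h
        rw [habs]
        constructor <;> linarith [this.1, this.2]
    have htg : Filter.Tendsto (fun s : ℝ => 8 * |s|) (nhds 0) (nhds 0) := by
      have : Filter.Tendsto (fun s : ℝ => |s|) (nhds 0) (nhds |0|) := continuous_abs.tendsto 0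
      simpa using this.const_mul 8
    have htg' : Filter.Tendsto (fun s : ℝ => -(8 * |s|)) (nhds 0) (nhds 0) := by
      simpa using htg.neg
    exact tendsto_of_tendsto_of_tendsto_of_le_of_le' htg' htg
      (hev.mono fun s h => h.1) (hev.mono fun s h => h.2)
  have hcont : ContinuousOn H (Ioo (-1 : ℝ) 1) := by
    intro x hx
    apply ContinuousAt.continuousWithinAt
    by_cases h0 : x = 0
    · rw [ContinuousAt, h0, hH0]; exact htend0
    · have hFc : ContinuousAt F x := by
        apply ContinuousAt.div
        · fun_prop
        · fun_prop
        · exact (hden x hx.1 hx.2 h0).ne'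
      apply hFc.congr
      have hmem : {s : ℝ | s ≠ 0} ∩ Ioo (-1:ℝ) 1 ∈ nhds x := by
        apply Filter.inter_mem
        · exact (isOpen_compl_singleton).mem_nhds h0
        · exact Ioo_mem_nhds hx.1 hx.2
      filter_upwards [hmem] with s hs
      exact (hHF s hs.2.1 hs.2.2 hs.1).symm
  -- strict monotonicity on right piece
  have hmonoR : StrictMonoOn H (Ico (0:ℝ) 1) := by
    apply strictMonoOn_of_deriv_pos (convex_Ico 0 1)
    · exact hcont.mono (fun s hs => ⟨by linarith [hs.1], hs.2⟩)
    · intro x hx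
      rw [interior_Ico] at hx
      obtain ⟨d, hd, hdd⟩ := hderiv x hx.1 hx.2
      rw [hdd.deriv]
      exact hd
  have hmonoL : ∀ x y : ℝ, -1 < x → x < y → y ≤ 0 → H x < H y := by
    intro x y h1 hxy hy0
    have h1' : -y ∈ Ico (0:ℝ) 1 := ⟨by linarith, by linarith⟩
    have h2' : -x ∈ Ico (0:ℝ) 1 := ⟨by linarith, by linarith⟩
    have := hmonoR h1' h2' (by linarith)
    have e1 : H (-y) = - H y := hodd y
    have e2 : H (-x) = - H x := hodd x
    rw [e1, e2] at this
    linarith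
  have hmono : StrictMonoOn H (Ioo (-1 : ℝ) 1) := by
    intro x hx y hy hxy
    rcases le_or_gt y 0 with hy0 | hy0
    · exact hmonoL x y hx.1 hxy hy0
    · rcases le_or_gt 0 x with hx0 | hx0
      · exact hmonoR ⟨hx0, hx.2⟩ ⟨by linarith, hy.2⟩ hxy
      · have h1 : H x < H 0 := hmonoL x 0 hx.1 hx0 le_rfl
        have h2 : H 0 < H y := hmonoR ⟨le_rfl, by norm_num⟩ ⟨by linarith, hy.2⟩ hy0
        linarith
  -- surjectivity
  have hbig : ∀ y : ℝ, ∃ b : ℝ, 0 < b ∧ b < 1 ∧ y < H b := by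
    intro y
    set M := max y 0 + 1 with hM
    have hM0 : 0 < M := by positivity
    have hMy : y < M := by simp [hM]; nlinarith [le_max_left y 0]
    set δ := min (1/2 : ℝ) (1 / (π^2 * M)) with hδ
    have hδ0 : 0 < δ := lt_min (by norm_num) (by positivity)
    have hδh : δ ≤ 1/2 := min_le_left _ _
    have hδM : δ ≤ 1 / (π^2 * M) := min_le_right _ _
    set b := 1 - δ with hb
    have hb0 : 0 < b := by simp [hb]; linarith
    have hb1 : b < 1 := by simp [hb]; linarith
    have hbhalf : 1/2 ≤ b := by simp [hb]; linarith
    refine ⟨b, hb0, hb1, ?_⟩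
    rw [hHF b (by linarith) hb1 (ne_of_gt hb0)]
    set θ := 2 * π * b with hθ
    have hθπ : π ≤ θ := by simp [hθ]; nlinarith
    have hθ2π : θ < 2 * π := by simp [hθ]; nlinarith
    have hd := hden b (by linarith) hb1 (ne_of_gt hb0)
    -- numerator lower bound
    have hnum : 2 ≤ θ - Real.sin θ := by
      have := Real.neg_one_le_sin θ
      have := Real.sin_le_one θ
      linarith
    -- denominator upper bound via sin (π * δ)
    have hsin_eq : Real.sin (π * b) = Real.sin (π * δ) := by
      have : π * b = π - π * δ := by rw [hb]; ring
      rw [this, Real.sin_pi_sub]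
    have hcosθ : Real.cos θ = 1 - 2 * Real.sin (π * b) ^ 2 := by
      have h := Real.cos_two_mul (π * b)
      rw [show (2:ℝ) * (π * b) = θ by rw [hθ]; ring] at h
      nlinarith [Real.sin_sq_add_cos_sq (π * b)]
    have hsinδ : Real.sin (π * δ) ≤ π * δ := Real.sin_le (by positivity)
    have hsinδ0 : 0 ≤ Real.sin (π * δ) := by
      apply Real.sin_nonneg_of_nonneg_of_le_pi (by positivity)
      nlinarith
    have hdu : 1 - Real.cos θ ≤ 2 * (π * δ)^2 := by
      rw [hcosθ, hsin_eq]
      nlinarith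
    -- conclude
    have hdu0 : (0:ℝ) < 2 * (π * δ)^2 := by positivity
    have hstep : 2 / (2 * (π * δ)^2) ≤ (θ - Real.sin θ) / (1 - Real.cos θ) := by
      exact div_le_div₀ (by linarith) hnum hd hdu
    have hfinal : y < 2 / (2 * (π * δ)^2) := by
      rw [lt_div_iff₀ hdu0]
      have hδ2 : δ^2 ≤ δ / 2 := by nlinarith
      have : π^2 * M * δ ≤ 1 := by
        rw [hδ] at hδM ⊢
        calc π^2 * M * δ ≤ π^2 * M * (1 / (π^2 * M)) := by
              apply mul_le_mul_of_nonneg_left hδM (by positivity)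
          _ = 1 := by field_simp
      nlinarith
    linarith
  have hsurj0 : ∀ y : ℝ, 0 ≤ y → ∃ s : ℝ, -1 < s ∧ s < 1 ∧ H s = y := by
    intro y hy
    obtain ⟨b, hb0, hb1, hby⟩ := hbig y
    have hsub : Icc (0:ℝ) b ⊆ Ioo (-1:ℝ) 1 := fun s hs => ⟨by linarith [hs.1], by linarith [hs.2]⟩
    have := intermediate_value_Icc hb0.le (hcont.mono hsub)
    have hmem : y ∈ Icc (H 0) (H b) := ⟨by rw [hH0]; exact hy, hby.le⟩
    obtain ⟨s, hs, hsy⟩ := this hmem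
    exact ⟨s, by linarith [hs.1], by linarith [hs.2], hsy⟩
  have hsurj : ∀ y : ℝ, ∃ s ∈ Ioo (-1:ℝ) 1, H s = y := by
    intro y
    rcases le_or_gt 0 y with hy | hy
    · obtain ⟨s, h1, h2, h3⟩ := hsurj0 y hy
      exact ⟨s, ⟨h1, h2⟩, h3⟩
    · obtain ⟨s, h1, h2, h3⟩ := hsurj0 (-y) (by linarith)
      refine ⟨-s, ⟨by linarith, by linarith⟩, ?_⟩
      rw [hodd s, h3]; ring
  refine ⟨hmono, hcont, ?_, hmono.injOn, ?_⟩
  · exact fun x _ => mem_univ _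
  · intro y _
    obtain ⟨s, hs, hsy⟩ := hsurj y
    exact ⟨s, hs, hsy⟩
end

section
/- Let d₀ : ℝ³ → ℝ be defined for (x₁,x₂,x₃) with (x₁,x₂) ≠ (0,0) by d₀(x₁,x₂,x₃) = (x₃/√(x₁²+x₂²)) sin(π H^{-1}(x₃/(x₁²+x₂²))) + √(x₁²+x₂²) cos(π H^{-1}(x₃/(x₁²+x₂²))), where H is as above. Then for fixed z = (z₁,z₂,z₃) ∈ ℝ³, lim_{s→+∞} [ d₀(z₁ − s, z₂, z₃ − 2z₂ s) − s ] = −z₁, and lim_{s→−∞} [ d₀(z₁ − s, z₂, z₃ − 2z₂ s) − |s| ] = z₁. -/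
open Real Set Filter

open Topology



lemma busemann_aux_sin {v : ℝ} (h0 : 0 ≤ v) (h1 : v ≤ π) : v * Real.cos v ≤ Real.sin v := by
  have hder : ∀ x : ℝ, HasDerivAt (fun v => Real.sin v - v * Real.cos v)
      (Real.cos x - (1 * Real.cos x + x * -Real.sin x)) x := fun x =>
    (Real.hasDerivAt_sin x).sub ((hasDerivAt_id x).mul (Real.hasDerivAt_cos x))
  have mono : MonotoneOn (fun v => Real.sin v - v * Real.cos v) (Icc 0 π) := by
    apply monotoneOn_of_deriv_nonneg (convex_Icc 0 π)
    · exact (Real.continuous_sin.sub (continuous_id.mul Real.continuous_cos)).continuousOn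
    · exact fun x _ => (hder x).differentiableAt.differentiableWithinAt
    · intro x hx
      rw [interior_Icc] at hx
      rw [(hder x).deriv]
      have hs : 0 ≤ Real.sin x := Real.sin_nonneg_of_nonneg_of_le_pi hx.1.le hx.2.le
      nlinarith [hx.1.le]
  have := mono (left_mem_Icc.mpr Real.pi_pos.le) ⟨h0, h1⟩ h0
  simp only [Real.sin_zero, Real.cos_zero, mul_one, zero_mul, sub_zero, mul_zero] at this
  linarith

lemma busemann_aux_u {u : ℝ} (h0 : 0 ≤ u) (h1 : u ≤ 2 * π) :
    u / 3 * (1 - Real.cos u) ≤ u - Real.sin u := by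
  have hder : ∀ x : ℝ, HasDerivAt (fun u => u - Real.sin u - u / 3 * (1 - Real.cos u))
      (1 - Real.cos x - (1 / 3 * (1 - Real.cos x) + x / 3 * Real.sin x)) x := by
    intro x
    have hA : HasDerivAt (fun u : ℝ => u / 3) (1 / 3) x := (hasDerivAt_id x).div_const 3
    have hB : HasDerivAt (fun u : ℝ => 1 - Real.cos u) (Real.sin x) x := by
      exact ((hasDerivAt_const x (1 : ℝ)).sub (Real.hasDerivAt_cos x)).congr_deriv (by ring)
    exact ((hasDerivAt_id x).sub (Real.hasDerivAt_sin x)).sub (hA.mul hB)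
  have mono : MonotoneOn (fun u => u - Real.sin u - u / 3 * (1 - Real.cos u)) (Icc 0 (2 * π)) := by
    apply monotoneOn_of_deriv_nonneg (convex_Icc 0 (2 * π))
    · fun_prop
    · exact fun x _ => (hder x).differentiableAt.differentiableWithinAt
    · intro x hx
      rw [interior_Icc] at hx
      rw [(hder x).deriv]
      have hv0 : 0 < x / 2 := by linarith [hx.1]
      have hvπ : x / 2 < π := by linarith [hx.2]
      have hsv : 0 ≤ Real.sin (x / 2) := (Real.sin_pos_of_pos_of_lt_pi hv0 hvπ).le
      have hkey := busemann_aux_sin hv0.le hvπ.le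
      have hc : Real.cos x = 2 * Real.cos (x / 2) ^ 2 - 1 := by
        rw [show x = 2 * (x / 2) by ring, Real.cos_two_mul]
        ring_nf
      have hs : Real.sin x = 2 * Real.sin (x / 2) * Real.cos (x / 2) := by
        rw [show x = 2 * (x / 2) by ring, Real.sin_two_mul]
        ring_nf
      have hpy := Real.sin_sq_add_cos_sq (x / 2)
      nlinarith [mul_nonneg hsv (sub_nonneg.mpr hkey)]
  have := mono (left_mem_Icc.mpr (by positivity)) ⟨h0, h1⟩ h0
  simp only [Real.sin_zero, Real.cos_zero, zero_div, zero_mul, sub_zero, sub_self] at this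
  linarith

lemma busemann_formula_lower {s : ℝ} (h0 : 0 < s) (h1 : s < 1) :
    2 * π / 3 * s ≤ 2 * π / (1 - Real.cos (2 * π * s)) * (s - Real.sin (2 * π * s) / (2 * π)) := by
  have hπ := Real.pi_pos
  have hsin : 0 < Real.sin (π * s) :=
    Real.sin_pos_of_pos_of_lt_pi (by positivity) (by nlinarith)
  have hcos : Real.cos (2 * π * s) = 2 * Real.cos (π * s) ^ 2 - 1 := by
    rw [show 2 * π * s = 2 * (π * s) by ring, Real.cos_two_mul]
  have hpy := Real.sin_sq_add_cos_sq (π * s)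
  have hP : 0 < 1 - Real.cos (2 * π * s) := by nlinarith
  have key := busemann_aux_u (u := 2 * π * s) (by positivity) (by nlinarith)
  have hX : 2 * π * (s - Real.sin (2 * π * s) / (2 * π)) = 2 * π * s - Real.sin (2 * π * s) := by
    field_simp
  rw [show 2 * π / (1 - Real.cos (2 * π * s)) * (s - Real.sin (2 * π * s) / (2 * π))
      = 2 * π * (s - Real.sin (2 * π * s) / (2 * π)) / (1 - Real.cos (2 * π * s)) from by ring,
    le_div_iff₀ hP, hX]
  refine (le_of_eq (by ring)).trans key

lemma busemann_H_lower (H : ℝ → ℝ)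
    (hH : ∀ s, s ≠ 0 →
      H s = (2 * π / (1 - Real.cos (2 * π * s))) * (s - Real.sin (2 * π * s) / (2 * π)))
    {s : ℝ} (hs : s ∈ Ioo (-1 : ℝ) 1) (hs0 : s ≠ 0) : 2 * π / 3 * |s| ≤ |H s| := by
  have hπ := Real.pi_pos
  rcases hs0.lt_or_gt with hneg | hpos
  · have hlow := busemann_formula_lower (s := -s) (by linarith) (by linarith [hs.1])
    have hHs : H s = -(2 * π / (1 - Real.cos (2 * π * -s)) * (-s - Real.sin (2 * π * -s) / (2 * π))) := by
      rw [hH s hs0, show 2 * π * -s = -(2 * π * s) by ring, Real.cos_neg, Real.sin_neg]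
      ring
    rw [abs_of_neg hneg]
    calc 2 * π / 3 * (-s) ≤ -H s := by rw [hHs]; simpa using hlow
      _ ≤ |H s| := neg_le_abs _
  · have hlow := busemann_formula_lower hpos hs.2
    rw [abs_of_pos hpos]
    calc 2 * π / 3 * s ≤ H s := by rw [hH s hs0]; exact hlow
      _ ≤ |H s| := le_abs_self _

lemma busemann_Hinv_bound (H : ℝ → ℝ)
    (hH : ∀ s, s ≠ 0 →
      H s = (2 * π / (1 - Real.cos (2 * π * s))) * (s - Real.sin (2 * π * s) / (2 * π)))
    (hH0 : H 0 = 0)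
    (Hinv : ℝ → ℝ) (hHinvMem : ∀ t, Hinv t ∈ Ioo (-1 : ℝ) 1)
    (hHinv : ∀ t, H (Hinv t) = t) :
    ∀ t, |Hinv t| ≤ 3 / (2 * π) * |t| := by
  intro t
  have hπ := Real.pi_pos
  rcases eq_or_ne (Hinv t) 0 with h | h
  · have ht : t = 0 := by rw [← hHinv t, h, hH0]
    subst ht
    simp [h]
  · have hb := busemann_H_lower H hH (hHinvMem t) h
    rw [hHinv t] at hb
    have h2 : 0 < 2 * π / 3 := by positivity
    calc |Hinv t| ≤ |t| / (2 * π / 3) := (le_div_iff₀' h2).mpr hb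
      _ = 3 / (2 * π) * |t| := by rw [div_div_eq_mul_div]; ring

set_option maxHeartbeats 1000000 in
lemma busemann_master (Hinv : ℝ → ℝ) (hb : ∀ t, |Hinv t| ≤ 3 / (2 * π) * |t|) (a b c e : ℝ) :
    Tendsto (fun s => (c + e * s) / Real.sqrt ((a - s) ^ 2 + b ^ 2) *
          Real.sin (π * Hinv ((c + e * s) / ((a - s) ^ 2 + b ^ 2))) +
        Real.sqrt ((a - s) ^ 2 + b ^ 2) *
          Real.cos (π * Hinv ((c + e * s) / ((a - s) ^ 2 + b ^ 2))) - s)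
      atTop (𝓝 (-a)) := by
  have hπ := Real.pi_pos
  set D : ℝ → ℝ := fun s => (a - s) ^ 2 + b ^ 2 with hDdef
  set r : ℝ → ℝ := fun s => Real.sqrt (D s) with hrdef
  set t : ℝ → ℝ := fun s => (c + e * s) / D s with htdef
  set φ : ℝ → ℝ := fun s => Hinv (t s) with hφdef
  set q : ℝ → ℝ := fun s => Real.sqrt (D s / s ^ 2) with hqdef
  -- eventual positivity facts
  have hev : ∀ᶠ s : ℝ in atTop, |a| < s := eventually_gt_atTop _
  have hfacts : ∀ s : ℝ, |a| < s → 0 < s ∧ 0 < D s ∧ 0 < r s ∧ q s = r s / s := by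
    intro s hs
    have hs0 : (0:ℝ) < s := (abs_nonneg a).trans_lt hs
    have hane : a - s ≠ 0 := by
      have : a < s := (le_abs_self a).trans_lt hs
      intro h; nlinarith [sub_eq_zero.mp h]
    have hD : 0 < D s := by
      have h1 : 0 < (a - s) ^ 2 := lt_of_le_of_ne (sq_nonneg _) (Ne.symm (pow_ne_zero 2 hane))
      have h2 : 0 ≤ b ^ 2 := sq_nonneg b
      simp only [hDdef]; nlinarith
    have hr : 0 < r s := Real.sqrt_pos.mpr hD
    refine ⟨hs0, hD, hr, ?_⟩
    show Real.sqrt (D s / s ^ 2) = Real.sqrt (D s) / s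
    rw [Real.sqrt_div hD.le, Real.sqrt_sq hs0.le]
  -- D s / s² → 1
  have hinv : Tendsto (fun s : ℝ => s⁻¹) atTop (𝓝 (0:ℝ)) := tendsto_inv_atTop_zero
  have hD1 : Tendsto (fun s => D s / s ^ 2) atTop (𝓝 1) := by
    have hcont : Tendsto (fun x : ℝ => (a * x - 1) ^ 2 + (b * x) ^ 2) (𝓝 0) (𝓝 1) := by
      have hc : Continuous fun x : ℝ => (a * x - 1) ^ 2 + (b * x) ^ 2 := by continuity
      simpa using hc.tendsto 0
    apply (hcont.comp hinv).congr'
    filter_upwards [eventually_gt_atTop (0:ℝ)] with s hs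
    have hs0 : s ≠ 0 := ne_of_gt hs
    simp only [Function.comp_apply, hDdef]
    field_simp
  -- q → 1
  have hq1 : Tendsto q atTop (𝓝 1) := by
    have := (Real.continuous_sqrt.tendsto 1).comp hD1
    simpa [hqdef, Function.comp_def] using this
  -- (c + e s)/r → e
  have h1 : Tendsto (fun s => (c + e * s) / r s) atTop (𝓝 e) := by
    have hlim : Tendsto (fun s : ℝ => (c * s⁻¹ + e) / q s) atTop (𝓝 e) := by
      have h := ((hinv.const_mul c).add_const e).div hq1 one_ne_zero
      have hval : (c * 0 + e) / (1:ℝ) = e := by norm_num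
      rwa [hval] at h
    apply hlim.congr'
    filter_upwards [hev] with s hs
    obtain ⟨hs0, hD, hr, hq⟩ := hfacts s hs
    rw [hq]
    field_simp
  -- r → ∞
  have hrtop : Tendsto r atTop atTop := by
    have := (hq1.pos_mul_atTop one_pos) tendsto_id
    apply this.congr'
    filter_upwards [hev] with s hs
    obtain ⟨hs0, hD, hr, hq⟩ := hfacts s hs
    rw [hq]; field_simp; rfl
  -- t → 0
  have ht0 : Tendsto t atTop (𝓝 0) := by
    have hlim := h1.mul hrtop.inv_tendsto_atTop
    rw [mul_zero] at hlim
    apply hlim.congr'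
    filter_upwards [hev] with s hs
    obtain ⟨hs0, hD, hr, hq⟩ := hfacts s hs
    have hDr : r s ^ 2 = D s := Real.sq_sqrt hD.le
    show (c + e * s) / r s * (r s)⁻¹ = (c + e * s) / D s
    rw [← hDr]
    field_simp
  -- φ → 0
  have hφ0 : Tendsto φ atTop (𝓝 0) := by
    have hg : Tendsto (fun s => 3 / (2 * π) * |t s|) atTop (𝓝 0) := by
      have h := (ht0.abs.const_mul (3 / (2 * π)))
      rwa [abs_zero, mul_zero] at h
    exact squeeze_zero_norm (fun s => by simpa [Real.norm_eq_abs] using hb (t s)) hg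
  have hπφ : Tendsto (fun s => π * φ s) atTop (𝓝 0) := by
    have h := hφ0.const_mul π
    rwa [mul_zero] at h
  have hsin : Tendsto (fun s => Real.sin (π * φ s)) atTop (𝓝 0) := by
    have := (Real.continuous_sin.tendsto 0).comp hπφ
    simpa [Function.comp_def] using this
  have hcos : Tendsto (fun s => Real.cos (π * φ s)) atTop (𝓝 1) := by
    have := (Real.continuous_cos.tendsto 0).comp hπφ
    simpa [Function.comp_def] using this
  -- r s - s → -a
  have h2 : Tendsto (fun s => r s - s) atTop (𝓝 (-a)) := by
    have hw : Tendsto (fun s : ℝ => ((a ^ 2 + b ^ 2) * s⁻¹ - 2 * a) / (q s + 1)) atTop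
        (𝓝 (-a)) := by
      have := ((hinv.const_mul (a ^ 2 + b ^ 2)).sub_const (2 * a)).div (hq1.add_const 1)
        (by norm_num)
      have hval : ((a ^ 2 + b ^ 2) * 0 - 2 * a) / (1 + 1) = -a := by ring
      rwa [hval] at this
    apply hw.congr'
    filter_upwards [hev] with s hs
    obtain ⟨hs0, hD, hr, hq⟩ := hfacts s hs
    have hDr : r s ^ 2 = D s := Real.sq_sqrt hD.le
    have hrs : 0 < r s + s := by linarith
    have key : (r s - s) * (r s + s) = a ^ 2 + b ^ 2 - 2 * a * s := by
      have hD' : D s = (a - s) ^ 2 + b ^ 2 := rfl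
      nlinarith [hDr]
    rw [hq]
    have hqne : (0:ℝ) < r s / s + 1 := by
      have := div_nonneg hr.le hs0.le
      linarith
    rw [div_eq_iff hqne.ne']
    field_simp
    nlinarith [key]
  have h2' : Tendsto (fun s => (r s - s) * Real.cos (π * φ s)) atTop (𝓝 (-a)) := by
    have h := h2.mul hcos
    rwa [mul_one] at h
  -- s (cos(πφ)-1) → 0
  have h3 : Tendsto (fun s => s * (Real.cos (π * φ s) - 1)) atTop (𝓝 0) := by
    have hg : Tendsto (fun s : ℝ => 9 / 8 * ((c * s⁻¹ + e) ^ 2 / (D s / s ^ 2) ^ 2 * s⁻¹))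
        atTop (𝓝 0) := by
      have hi := (((hinv.const_mul c).add_const e).pow 2).div (hD1.pow 2) (by norm_num)
      have h := (hi.mul hinv).const_mul (9 / 8 : ℝ)
      have hval : (9:ℝ) / 8 * ((c * 0 + e) ^ 2 / (1:ℝ) ^ 2 * 0) = 0 := by norm_num
      rwa [hval] at h
    apply squeeze_zero_norm' _ hg
    filter_upwards [hev] with s hs
    obtain ⟨hs0, hD, hr, hq⟩ := hfacts s hs
    have hgs : 9 / 8 * ((c * s⁻¹ + e) ^ 2 / (D s / s ^ 2) ^ 2 * s⁻¹)
        = 9 / 8 * (s * t s ^ 2) := by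
      rw [htdef]
      field_simp
    rw [hgs, Real.norm_eq_abs, abs_mul, abs_of_pos hs0,
      abs_of_nonpos (by linarith [Real.cos_le_one (π * φ s)] : Real.cos (π * φ s) - 1 ≤ 0)]
    -- bound 1 - cos(πφ) ≤ 9/8 t²
    have hid : 1 - Real.cos (π * φ s) = 2 * Real.sin (π * φ s / 2) ^ 2 := by
      have h2v := Real.cos_two_mul (π * φ s / 2)
      rw [show 2 * (π * φ s / 2) = π * φ s by ring] at h2v
      have hpy := Real.sin_sq_add_cos_sq (π * φ s / 2)
      linarith
    have hsinb := Real.sin_sq_le_sq (x := π * φ s / 2)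
    have h2π : (0:ℝ) < 2 * π := by positivity
    have hlin : |φ s| * (2 * π) ≤ 3 * |t s| := by
      have hφb := hb (t s)
      rw [div_mul_eq_mul_div] at hφb
      exact (le_div_iff₀ h2π).mp hφb
    have hφsq : 4 * π ^ 2 * φ s ^ 2 ≤ 9 * t s ^ 2 := by
      nlinarith [mul_self_le_mul_self (mul_nonneg (abs_nonneg (φ s)) h2π.le) hlin,
        sq_abs (φ s), sq_abs (t s)]
    have hA : 1 - Real.cos (π * φ s) ≤ 9 / 8 * t s ^ 2 := by nlinarith
    nlinarith [mul_le_mul_of_nonneg_left hA hs0.le]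
  -- combine
  have total := (h1.mul hsin).add h2' |>.add h3
  have hval : e * 0 + -a + 0 = -a := by ring
  rw [hval] at total
  apply total.congr
  intro s
  ring


/-- Busemann-function limits along the horizontal line `γ(s) = (s,0,0)` in the Heisenberg
group `ℍ¹`: with `d₀` the Hajłasz–Zimmerman formula for the Carnot–Carathéodory distance
from the origin, `d₀((-γ(s))·z) - |s| → ∓z₁` as `s → ±∞`. -/
theorem heisenberg_busemann_limits
    (H : ℝ → ℝ)
    (hH : ∀ s, s ≠ 0 →
      H s = (2 * π / (1 - Real.cos (2 * π * s))) * (s - Real.sin (2 * π * s) / (2 * π)))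
    (hH0 : H 0 = 0)
    (Hinv : ℝ → ℝ) (hHinvMem : ∀ t, Hinv t ∈ Ioo (-1 : ℝ) 1)
    (hHinv : ∀ t, H (Hinv t) = t)
    (d₀ : ℝ → ℝ → ℝ → ℝ)
    (hd₀ : ∀ x₁ x₂ x₃ : ℝ, ¬(x₁ = 0 ∧ x₂ = 0) →
      d₀ x₁ x₂ x₃ =
        x₃ / Real.sqrt (x₁ ^ 2 + x₂ ^ 2) *
            Real.sin (π * Hinv (x₃ / (x₁ ^ 2 + x₂ ^ 2))) +
          Real.sqrt (x₁ ^ 2 + x₂ ^ 2) *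
            Real.cos (π * Hinv (x₃ / (x₁ ^ 2 + x₂ ^ 2))))
    (z₁ z₂ z₃ : ℝ) :
    Tendsto (fun s => d₀ (z₁ - s) z₂ (z₃ - 2 * z₂ * s) - s) atTop (nhds (-z₁)) ∧
      Tendsto (fun s => d₀ (z₁ - s) z₂ (z₃ - 2 * z₂ * s) - |s|) atBot (nhds z₁) := by
  have hbnd := busemann_Hinv_bound H hH hH0 Hinv hHinvMem hHinv
  constructor
  · have m1 := busemann_master Hinv hbnd z₁ z₂ z₃ (-(2 * z₂))
    apply m1.congr'
    filter_upwards [eventually_gt_atTop z₁] with s hs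
    have hne : ¬(z₁ - s = 0 ∧ z₂ = 0) := by
      rintro ⟨h, -⟩
      have h' : z₁ = s := sub_eq_zero.mp h
      linarith
    rw [hd₀ (z₁ - s) z₂ (z₃ - 2 * z₂ * s) hne,
      show z₃ + -(2 * z₂) * s = z₃ - 2 * z₂ * s from by ring]
  · have m2 := busemann_master Hinv hbnd (-z₁) z₂ z₃ (2 * z₂)
    have m2' := m2.comp tendsto_neg_atBot_atTop
    rw [neg_neg] at m2'
    apply m2'.congr'
    filter_upwards [eventually_lt_atBot (-|z₁|)] with s hs
    have hz : 0 < z₁ - s := by linarith [neg_abs_le z₁]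
    have hs0 : s < 0 := by linarith [abs_nonneg z₁]
    have hne : ¬(z₁ - s = 0 ∧ z₂ = 0) := by rintro ⟨h, -⟩; linarith
    simp only [Function.comp_apply]
    rw [hd₀ (z₁ - s) z₂ (z₃ - 2 * z₂ * s) hne, abs_of_neg hs0,
      show (-z₁ - -s) ^ 2 + z₂ ^ 2 = (z₁ - s) ^ 2 + z₂ ^ 2 from by ring,
      show z₃ + 2 * z₂ * -s = z₃ - 2 * z₂ * s from by ring]
end
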